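/- arXiv:2009.11991 — 16 statements merged into one kernel-verified Lean document; each statement's English description precedes it below -/
import Mathlib

section
/- Let A be an n×n real matrix, β ∈ ℝ, and define the iteration S_1 = A Aᵀ + Aᵀ A, S_{k+1} = A(I_n + β² S_k)Aᵀ + Aᵀ(I_n + β² S_k)A for k ≥ 1. Then for every k ≥ 1, the column space of S_k equals the column space of the compound matrix [A Aᵀ], and consequently rank(S_k) = rank([A Aᵀ]) for all k ≥ 1. -/
open Matrix

section Aux

variable {n : ℕ}

private lemma dot_form (A P : Matrix (Fin n) (Fin n) ℝ) (x : Fin n → ℝ) :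
    x ⬝ᵥ ((A * P * Aᵀ) *ᵥ x) = (Aᵀ *ᵥ x) ⬝ᵥ (P *ᵥ (Aᵀ *ᵥ x)) := by
  rw [← mulVec_mulVec, ← mulVec_mulVec, dotProduct_mulVec, ← mulVec_transpose,
    dotProduct_mulVec, ← mulVec_transpose]

private lemma dot_form' (A P : Matrix (Fin n) (Fin n) ℝ) (x : Fin n → ℝ) :
    x ⬝ᵥ ((Aᵀ * P * A) *ᵥ x) = (A *ᵥ x) ⬝ᵥ (P *ᵥ (A *ᵥ x)) := by
  simpa using dot_form Aᵀ P x

/-- nonnegativity from positivity -/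
private lemma pos_to_nonneg {P : Matrix (Fin n) (Fin n) ℝ}
    (hP : ∀ y : Fin n → ℝ, y ≠ 0 → 0 < y ⬝ᵥ (P *ᵥ y)) (y : Fin n → ℝ) :
    0 ≤ y ⬝ᵥ (P *ᵥ y) := by
  by_cases hy : y = 0
  · simp [hy]
  · exact (hP y hy).le

private lemma form_kernel {A P : Matrix (Fin n) (Fin n) ℝ}
    (hP : ∀ y : Fin n → ℝ, y ≠ 0 → 0 < y ⬝ᵥ (P *ᵥ y)) {x : Fin n → ℝ}
    (hx : (A * P * Aᵀ + Aᵀ * P * A) *ᵥ x = 0) :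
    A *ᵥ x = 0 ∧ Aᵀ *ᵥ x = 0 := by
  have h0 : x ⬝ᵥ ((A * P * Aᵀ) *ᵥ x) + x ⬝ᵥ ((Aᵀ * P * A) *ᵥ x) = 0 := by
    have := congrArg (fun v => x ⬝ᵥ v) hx
    simpa [add_mulVec, dotProduct_add] using this
  have h1 : 0 ≤ x ⬝ᵥ ((A * P * Aᵀ) *ᵥ x) := by
    rw [dot_form]; exact pos_to_nonneg hP _
  have h2 : 0 ≤ x ⬝ᵥ ((Aᵀ * P * A) *ᵥ x) := by
    rw [dot_form']; exact pos_to_nonneg hP _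
  have e1 : x ⬝ᵥ ((A * P * Aᵀ) *ᵥ x) = 0 := le_antisymm (by linarith) h1
  have e2 : x ⬝ᵥ ((Aᵀ * P * A) *ᵥ x) = 0 := le_antisymm (by linarith) h2
  rw [dot_form] at e1
  rw [dot_form'] at e2
  constructor
  · by_contra h
    exact absurd e2 (ne_of_gt (hP _ h))
  · by_contra h
    exact absurd e1 (ne_of_gt (hP _ h))

/-- Key lemma: the range of `A*P*Aᵀ + Aᵀ*P*A`, for `P` positive definite, equals the
range of the compound matrix `[A Aᵀ]`. -/
private lemma form_range {A P : Matrix (Fin n) (Fin n) ℝ}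
    (hP : ∀ y : Fin n → ℝ, y ≠ 0 → 0 < y ⬝ᵥ (P *ᵥ y)) :
    LinearMap.range (A * P * Aᵀ + Aᵀ * P * A).mulVecLin
      = LinearMap.range (Matrix.fromCols A Aᵀ).mulVecLin := by
  set T : Matrix (Fin n) (Fin n) ℝ := A * P * Aᵀ + Aᵀ * P * A with hT
  set M := Matrix.fromCols A Aᵀ with hM
  -- range T ≤ range M
  have hle : LinearMap.range T.mulVecLin ≤ LinearMap.range M.mulVecLin := by
    rintro _ ⟨x, rfl⟩
    refine ⟨Sum.elim (P *ᵥ (Aᵀ *ᵥ x)) (P *ᵥ (A *ᵥ x)), ?_⟩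
    simp only [mulVecLin_apply, hM, fromCols_mulVec_sumElim, hT, add_mulVec,
      ← mulVec_mulVec]
  -- kernel of T is contained in kernel of Mᵀ
  have hker : LinearMap.ker T.mulVecLin ≤ LinearMap.ker Mᵀ.mulVecLin := by
    intro x hx
    simp only [LinearMap.mem_ker, mulVecLin_apply] at hx ⊢
    obtain ⟨h1, h2⟩ := form_kernel hP hx
    rw [hM, transpose_fromCols, fromRows_mulVec, h2, transpose_transpose, h1]
    simp
  have hkle : Module.finrank ℝ (LinearMap.ker T.mulVecLin)
      ≤ Module.finrank ℝ (LinearMap.ker Mᵀ.mulVecLin) := Submodule.finrank_mono hker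
  have rn1 := LinearMap.finrank_range_add_finrank_ker T.mulVecLin
  have rn2 := LinearMap.finrank_range_add_finrank_ker Mᵀ.mulVecLin
  have hrank : Mᵀ.rank = M.rank := rank_transpose M
  rw [Matrix.rank, Matrix.rank] at hrank
  refine Submodule.eq_of_le_of_finrank_le hle ?_
  omega

end Aux

/-- For the similarity iteration `S₁ = A Aᵀ + Aᵀ A`,
`S_{k+1} = A(I + β² S_k)Aᵀ + Aᵀ(I + β² S_k)A`, every `S_k` (`k ≥ 1`) has column space
equal to that of the compound matrix `[A Aᵀ]`, and hence `rank S_k = rank [A Aᵀ]`. -/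
theorem colSpace_Sk_eq_colSpace_compound (n : ℕ) (A : Matrix (Fin n) (Fin n) ℝ) (β : ℝ)
    (S : ℕ → Matrix (Fin n) (Fin n) ℝ)
    (hS1 : S 1 = A * Aᵀ + Aᵀ * A)
    (hSk : ∀ k, 1 ≤ k →
      S (k + 1) = A * (1 + β ^ 2 • S k) * Aᵀ + Aᵀ * (1 + β ^ 2 • S k) * A) :
    ∀ k, 1 ≤ k →
      LinearMap.range (S k).mulVecLin
          = LinearMap.range (Matrix.fromCols A Aᵀ).mulVecLin ∧
      (S k).rank = (Matrix.fromCols A Aᵀ).rank := by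
  -- positive definiteness of the identity
  have hone : ∀ y : Fin n → ℝ, y ≠ 0 → 0 < y ⬝ᵥ ((1 : Matrix (Fin n) (Fin n) ℝ) *ᵥ y) := by
    intro y hy
    simpa [star_trivial] using dotProduct_star_self_pos_iff.mpr hy
  -- positive semidefiniteness of the iterates
  have hpsd : ∀ k, 1 ≤ k → ∀ x : Fin n → ℝ, 0 ≤ x ⬝ᵥ (S k *ᵥ x) := by
    intro k hk
    induction k, hk using Nat.le_induction with
    | base =>
      intro x
      have : S 1 = A * 1 * Aᵀ + Aᵀ * 1 * A := by simpa using hS1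
      rw [this, add_mulVec, dotProduct_add, dot_form, dot_form']
      exact add_nonneg (pos_to_nonneg hone _) (pos_to_nonneg hone _)
    | succ k hk ih =>
      intro x
      rw [hSk k hk, add_mulVec, dotProduct_add, dot_form, dot_form']
      have hPpos : ∀ y : Fin n → ℝ,
          0 ≤ y ⬝ᵥ ((1 + β ^ 2 • S k) *ᵥ y) := by
        intro y
        rw [add_mulVec, dotProduct_add, smul_mulVec, dotProduct_smul]
        exact add_nonneg (pos_to_nonneg hone _)
          (smul_nonneg (sq_nonneg β) (ih y))
      exact add_nonneg (hPpos _) (hPpos _)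
  -- positive definiteness of `1 + β² S k`
  have hPdef : ∀ k, 1 ≤ k → ∀ y : Fin n → ℝ, y ≠ 0 →
      0 < y ⬝ᵥ ((1 + β ^ 2 • S k) *ᵥ y) := by
    intro k hk y hy
    rw [add_mulVec, dotProduct_add, smul_mulVec, dotProduct_smul]
    exact add_pos_of_pos_of_nonneg (hone y hy)
      (smul_nonneg (sq_nonneg β) (hpsd k hk y))
  -- main statement
  intro k hk
  have hrange : LinearMap.range (S k).mulVecLin
      = LinearMap.range (Matrix.fromCols A Aᵀ).mulVecLin := by
    rcases Nat.exists_eq_add_of_le hk with ⟨j, rfl⟩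
    rcases Nat.eq_zero_or_pos j with hj | hj
    · subst hj
      have : S 1 = A * 1 * Aᵀ + Aᵀ * 1 * A := by simpa using hS1
      rw [this]
      exact form_range hone
    · have hj1 : 1 ≤ j := hj
      rw [show 1 + j = j + 1 by omega, hSk j hj1]
      exact form_range (hPdef j hj1)
  exact ⟨hrange, by rw [Matrix.rank, Matrix.rank, hrange]⟩
end

section
/- Let A be an n×n real matrix, β ∈ ℝ, and define the iteration S_1 = A Aᵀ + Aᵀ A, S_{k+1} = A(I_n + β² S_k)Aᵀ + Aᵀ(I_n + β² S_k)A for k ≥ 1. Then each S_k is symmetric positive semidefinite, and for every k ≥ 1 the matrix S_k − S_1 is positive semidefinite (i.e., S_k ⪰ S_1 in the Loewner order). -/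
open Matrix


lemma psd_smul {n : ℕ} {S : Matrix (Fin n) (Fin n) ℝ} (h : S.PosSemidef) {c : ℝ} (hc : 0 ≤ c) :
    (c • S).PosSemidef := by
  refine ⟨by unfold Matrix.IsHermitian; rw [conjTranspose_smul, h.1]; simp, fun x => ?_⟩
  exact (h.smul hc).2 x

/-- Every iterate `S_k` (`k ≥ 1`) of the similarity iteration is symmetric
positive semidefinite, and `S_k − S₁` is positive semidefinite (`S_k ⪰ S₁` in the
Loewner order). -/
theorem Sk_posSemidef_and_loewner_ge_S1 (n : ℕ) (A : Matrix (Fin n) (Fin n) ℝ) (β : ℝ)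
    (S : ℕ → Matrix (Fin n) (Fin n) ℝ)
    (hS1 : S 1 = A * Aᵀ + Aᵀ * A)
    (hSk : ∀ k, 1 ≤ k →
      S (k + 1) = A * (1 + β ^ 2 • S k) * Aᵀ + Aᵀ * (1 + β ^ 2 • S k) * A) :
    ∀ k, 1 ≤ k → (S k).PosSemidef ∧ (S k - S 1).PosSemidef := by
  have hAT : Aᵀ = Aᴴ := (conjTranspose_eq_transpose_of_trivial A).symm
  have hATT : (Aᵀ)ᴴ = A := by rw [hAT, conjTranspose_conjTranspose]
  have hS1psd : (S 1).PosSemidef := by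
    rw [hS1, hAT]
    exact (posSemidef_self_mul_conjTranspose A).add (posSemidef_conjTranspose_mul_self A)
  intro k hk
  induction k with
  | zero => omega
  | succ k ih =>
    rcases Nat.lt_or_ge 1 (k+1) with h | h
    · have hk1 : 1 ≤ k := by omega
      obtain ⟨hpsd, -⟩ := ih hk1
      have hb : (0:ℝ) ≤ β ^ 2 := sq_nonneg β
      have hsm : (β ^ 2 • S k).PosSemidef := psd_smul hpsd hb
      have h1 : ((1 : Matrix (Fin n) (Fin n) ℝ) + β ^ 2 • S k).PosSemidef :=
        Matrix.PosSemidef.add (Matrix.PosSemidef.one) hsm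
      have t1 : (A * (1 + β ^ 2 • S k) * Aᵀ).PosSemidef := by
        rw [hAT]; exact h1.mul_mul_conjTranspose_same A
      have t2 : (Aᵀ * (1 + β ^ 2 • S k) * A).PosSemidef := by
        rw [show A = (Aᵀ)ᴴ from hATT.symm]; exact h1.mul_mul_conjTranspose_same Aᵀ
      constructor
      · rw [hSk k hk1]; exact t1.add t2
      · have : S (k+1) - S 1 = A * (β ^ 2 • S k) * Aᵀ + Aᵀ * (β ^ 2 • S k) * A := by
          rw [hSk k hk1, hS1]; ring_nf; noncomm_ring
        rw [this]
        have u1 : (A * (β ^ 2 • S k) * Aᵀ).PosSemidef := by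
          rw [hAT]; exact hsm.mul_mul_conjTranspose_same A
        have u2 : (Aᵀ * (β ^ 2 • S k) * A).PosSemidef := by
          rw [show A = (Aᵀ)ᴴ from hATT.symm]; exact hsm.mul_mul_conjTranspose_same Aᵀ
        exact u1.add u2
    · have : k + 1 = 1 := by omega
      rw [this]
      exact ⟨hS1psd, by simpa using Matrix.PosSemidef.zero⟩
end

section
/- Let A be an n×n real matrix and β ∈ ℝ. If S is a symmetric positive semidefinite n×n matrix satisfying the fixed-point equation S = A(I_n + β² S)Aᵀ + Aᵀ(I_n + β² S)A, then the column space of S equals the column space of the compound matrix [A Aᵀ], and rank(S) = rank([A Aᵀ]). -/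
open Matrix

private lemma quad_nonneg {n : ℕ} {S : Matrix (Fin n) (Fin n) ℝ} (hS : S.PosSemidef)
    (β : ℝ) (y : Fin n → ℝ) : 0 ≤ y ⬝ᵥ ((1 + β ^ 2 • S) *ᵥ y) := by
  have h1 : y ⬝ᵥ ((1 + β ^ 2 • S) *ᵥ y) = y ⬝ᵥ y + β ^ 2 * (y ⬝ᵥ (S *ᵥ y)) := by
    simp [Matrix.add_mulVec, Matrix.smul_mulVec, dotProduct_add, dotProduct_smul,
      smul_eq_mul]
  have h2 : (0:ℝ) ≤ y ⬝ᵥ (S *ᵥ y) := by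
    simpa using hS.re_dotProduct_nonneg y
  have h3 : (0:ℝ) ≤ y ⬝ᵥ y := by simpa using dotProduct_star_self_nonneg y
  nlinarith [sq_nonneg β]

private lemma quad_eq_zero {n : ℕ} {S : Matrix (Fin n) (Fin n) ℝ} (hS : S.PosSemidef)
    (β : ℝ) (y : Fin n → ℝ) (h : y ⬝ᵥ ((1 + β ^ 2 • S) *ᵥ y) = 0) : y = 0 := by
  have h1 : y ⬝ᵥ ((1 + β ^ 2 • S) *ᵥ y) = y ⬝ᵥ y + β ^ 2 * (y ⬝ᵥ (S *ᵥ y)) := by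
    simp [Matrix.add_mulVec, Matrix.smul_mulVec, dotProduct_add, dotProduct_smul,
      smul_eq_mul]
  have h2 : (0:ℝ) ≤ y ⬝ᵥ (S *ᵥ y) := by
    simpa using hS.re_dotProduct_nonneg y
  have h3 : (0:ℝ) ≤ y ⬝ᵥ y := by simpa using dotProduct_star_self_nonneg y
  have h4 : (0:ℝ) ≤ β ^ 2 * (y ⬝ᵥ (S *ᵥ y)) := mul_nonneg (sq_nonneg β) h2
  have : y ⬝ᵥ y = 0 := by linarith [h1 ▸ h]
  exact dotProduct_self_eq_zero.mp this

/-- If `S` is a symmetric positive semidefinite matrix satisfying the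
fixed-point equation `S = A(I + β² S)Aᵀ + Aᵀ(I + β² S)A`, then the column space of `S`
equals the column space of the compound matrix `[A Aᵀ]`, and `rank S = rank [A Aᵀ]`. -/
theorem fixedPoint_colSpace_eq_compound (n : ℕ) (A : Matrix (Fin n) (Fin n) ℝ) (β : ℝ)
    (S : Matrix (Fin n) (Fin n) ℝ) (hS : S.PosSemidef)
    (hfix : S = A * (1 + β ^ 2 • S) * Aᵀ + Aᵀ * (1 + β ^ 2 • S) * A) :
    LinearMap.range S.mulVecLin
        = LinearMap.range (Matrix.fromCols A Aᵀ).mulVecLin ∧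
      S.rank = (Matrix.fromCols A Aᵀ).rank := by
  set M : Matrix (Fin n) (Fin n) ℝ := 1 + β ^ 2 • S with hM
  -- the fixed point equation in mulVec form
  have hSv : ∀ x, S *ᵥ x = A *ᵥ (M *ᵥ (Aᵀ *ᵥ x)) + Aᵀ *ᵥ (M *ᵥ (A *ᵥ x)) := by
    intro x
    conv_lhs => rw [hfix]
    simp [Matrix.add_mulVec, Matrix.mulVec_mulVec, mul_assoc]
  -- kernels coincide
  have hker : LinearMap.ker S.mulVecLin
      = LinearMap.ker (Matrix.fromRows Aᵀ A).mulVecLin := by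
    ext x
    simp only [LinearMap.mem_ker, Matrix.mulVecLin_apply, Matrix.fromRows_mulVec]
    constructor
    · intro hx
      have hq : x ⬝ᵥ (S *ᵥ x) = 0 := by rw [hx]; simp
      have hsplit : x ⬝ᵥ (S *ᵥ x)
          = (Aᵀ *ᵥ x) ⬝ᵥ (M *ᵥ (Aᵀ *ᵥ x)) + (A *ᵥ x) ⬝ᵥ (M *ᵥ (A *ᵥ x)) := by
        rw [hSv x, dotProduct_add]
        congr 1
        · rw [dotProduct_mulVec, ← Matrix.mulVec_transpose]
        · rw [dotProduct_mulVec, ← Matrix.mulVec_transpose, Matrix.transpose_transpose]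
      have h1 := quad_nonneg hS β (Aᵀ *ᵥ x)
      have h2 := quad_nonneg hS β (A *ᵥ x)
      have e1 : (Aᵀ *ᵥ x) ⬝ᵥ (M *ᵥ (Aᵀ *ᵥ x)) = 0 := by
        rw [hsplit] at hq; linarith
      have e2 : (A *ᵥ x) ⬝ᵥ (M *ᵥ (A *ᵥ x)) = 0 := by
        rw [hsplit] at hq; linarith
      have z1 : Aᵀ *ᵥ x = 0 := quad_eq_zero hS β _ e1
      have z2 : A *ᵥ x = 0 := quad_eq_zero hS β _ e2
      funext i
      cases i with
      | inl i => simpa using congrFun z1 i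
      | inr i => simpa using congrFun z2 i
    · intro hx
      have z1 : Aᵀ *ᵥ x = 0 := funext fun i => congrFun hx (Sum.inl i)
      have z2 : A *ᵥ x = 0 := funext fun i => congrFun hx (Sum.inr i)
      rw [hSv x, z1, z2]
      simp
  -- range S ⊆ range fromColumns
  have hle : LinearMap.range S.mulVecLin
      ≤ LinearMap.range (Matrix.fromCols A Aᵀ).mulVecLin := by
    rintro _ ⟨x, rfl⟩
    refine ⟨Sum.elim (M *ᵥ (Aᵀ *ᵥ x)) (M *ᵥ (A *ᵥ x)), ?_⟩
    simp only [Matrix.mulVecLin_apply, Matrix.fromCols_mulVec_sumElim]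
    exact (hSv x).symm
  -- equal finrank of ranges
  have hrankT : (Matrix.fromCols A Aᵀ).rank = (Matrix.fromRows Aᵀ A).rank := by
    rw [← Matrix.rank_transpose (Matrix.fromCols A Aᵀ), Matrix.transpose_fromCols,
      Matrix.transpose_transpose]
  have hdim1 := LinearMap.finrank_range_add_finrank_ker S.mulVecLin
  have hdim2 := LinearMap.finrank_range_add_finrank_ker (Matrix.fromRows Aᵀ A).mulVecLin
  rw [hker] at hdim1
  have hfr : Module.finrank ℝ (LinearMap.range S.mulVecLin)
      = Module.finrank ℝ (LinearMap.range (Matrix.fromRows Aᵀ A).mulVecLin) := by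
    omega
  have hranks : S.rank = (Matrix.fromCols A Aᵀ).rank := by
    rw [hrankT]
    exact hfr
  refine ⟨?_, hranks⟩
  exact Submodule.eq_of_le_of_finrank_eq hle hranks
end

section
/- Let A = (PZ)B(PZ)ᵀ be an ideal adjacency matrix, where P is an n×n permutation matrix, B is a q×q real matrix, and Z = Diag{z_1, …, z_q} ∈ ℝ^{n×q} is block diagonal with z_i the all-ones column vector of length n_i ≥ 1 and n = n_1 + ⋯ + n_q. Let β ∈ ℝ and define S_1 = A Aᵀ + Aᵀ A, S_{k+1} = A(I_n + β² S_k)Aᵀ + Aᵀ(I_n + β² S_k)A. Then for every k ≥ 1 the column space of S_k is contained in the column space of PZ, and hence rank(S_k) ≤ q. -/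
open Matrix

/-- For an ideal adjacency matrix `A = (PZ)B(PZ)ᵀ`, where `P` is a
permutation matrix and `Z = Diag{z₁,…,z_q}` is block diagonal with `z_i` the all-ones
vector of length `n_i ≥ 1` (nodes indexed by the sigma type `Σ i : Fin q, Fin (m i)`),
every iterate `S_k` (`k ≥ 1`) of the similarity iteration has column space contained in
the column space of `PZ`, and hence `rank S_k ≤ q`. -/
theorem ideal_colSpace_Sk_le_colSpace_PZ (q : ℕ) (m : Fin q → ℕ) (hm : ∀ i, 1 ≤ m i)
    (P : Matrix ((i : Fin q) × Fin (m i)) ((i : Fin q) × Fin (m i)) ℝ)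
    (hP : ∃ σ : Equiv.Perm ((i : Fin q) × Fin (m i)), P = σ.permMatrix ℝ)
    (Z : Matrix ((i : Fin q) × Fin (m i)) (Fin q) ℝ)
    (hZ : ∀ i j, Z i j = if i.1 = j then 1 else 0)
    (B : Matrix (Fin q) (Fin q) ℝ)
    (A : Matrix ((i : Fin q) × Fin (m i)) ((i : Fin q) × Fin (m i)) ℝ)
    (hA : A = (P * Z) * B * (P * Z)ᵀ)
    (β : ℝ)
    (S : ℕ → Matrix ((i : Fin q) × Fin (m i)) ((i : Fin q) × Fin (m i)) ℝ)
    (hS1 : S 1 = A * Aᵀ + Aᵀ * A)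
    (hSk : ∀ k, 1 ≤ k →
      S (k + 1) = A * (1 + β ^ 2 • S k) * Aᵀ + Aᵀ * (1 + β ^ 2 • S k) * A) :
    ∀ k, 1 ≤ k →
      LinearMap.range (S k).mulVecLin ≤ LinearMap.range (P * Z).mulVecLin ∧
      (S k).rank ≤ q := by

  set W := P * Z with hW
  have key : ∀ k, 1 ≤ k → ∃ M : Matrix (Fin q) (Fin q) ℝ, S k = W * M * Wᵀ := by
    intro k hk
    induction k with
    | zero => omega
    | succ n ih =>
      rcases Nat.lt_or_ge n 1 with hn | hn
      · interval_cases n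
        refine ⟨B * (Wᵀ * W) * Bᵀ + Bᵀ * (Wᵀ * W) * B, ?_⟩
        simp only [hS1, hA, Matrix.transpose_mul, Matrix.transpose_transpose]
        simp only [Matrix.mul_add, Matrix.add_mul, Matrix.mul_assoc]
      · obtain ⟨M, hM⟩ := ih hn
        refine ⟨B * (Wᵀ * W) * Bᵀ + Bᵀ * (Wᵀ * W) * B
          + β ^ 2 • (B * (Wᵀ * W) * M * (Wᵀ * W) * Bᵀ
            + Bᵀ * (Wᵀ * W) * M * (Wᵀ * W) * B), ?_⟩
        rw [hSk n hn, hM, hA]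
        simp only [Matrix.transpose_mul, Matrix.transpose_transpose, Matrix.mul_add,
          Matrix.add_mul, Matrix.mul_one, Matrix.mul_smul, Matrix.smul_mul, smul_add,
          Matrix.mul_assoc]
        abel
  intro k hk
  obtain ⟨M, hM⟩ := key k hk
  have hrange : LinearMap.range (S k).mulVecLin ≤ LinearMap.range W.mulVecLin := by
    rw [hM]
    rintro x ⟨v, rfl⟩
    exact ⟨(M * Wᵀ).mulVecLin v, by simp [Matrix.mulVecLin_mul]⟩
  refine ⟨hrange, ?_⟩
  calc (S k).rank ≤ W.rank := Submodule.finrank_mono hrange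
    _ ≤ Fintype.card (Fin q) := W.rank_le_card_width
    _ = q := Fintype.card_fin q
end

section
/- Let A = (PZ)B(PZ)ᵀ be an ideal adjacency matrix with P an n×n permutation matrix, B a q×q real matrix, and Z = Diag{z_1, …, z_q} ∈ ℝ^{n×q} block diagonal with z_i the all-ones vector of length n_i ≥ 1. Let N := ZᵀZ = diag(n_1, …, n_q), β ∈ ℝ, and let S_k be the similarity iteration for A. Define Ŝ_k := N⁻¹(PZ)ᵀ S_k (PZ) N⁻¹. Then S_k = (PZ) Ŝ_k (PZ)ᵀ for all k ≥ 1, each Ŝ_k is positive semidefinite, and the Ŝ_k satisfy the recurrence Ŝ_1 = B N Bᵀ + Bᵀ N B and Ŝ_k = B N_k Bᵀ + Bᵀ N_k B for k > 1, where N_k := N + β² N Ŝ_{k−1} N. -/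
open Matrix

lemma my_psd_smul {n : Type*} [Fintype n] {M : Matrix n n ℝ} (hM : M.PosSemidef) {c : ℝ}
    (hc : 0 ≤ c) : (c • M).PosSemidef := by
  rw [Matrix.posSemidef_iff_dotProduct_mulVec]
  constructor
  · unfold Matrix.IsHermitian
    rw [conjTranspose_smul, hM.1]
    simp
  · intro x
    rw [smul_mulVec, dotProduct_smul]
    exact mul_nonneg hc (hM.dotProduct_mulVec_nonneg x)

lemma my_psd_congr {n p : Type*} [Fintype n] [Fintype p] {C : Matrix n n ℝ}
    (h : C.PosSemidef) (X : Matrix p n ℝ) : (X * C * Xᵀ).PosSemidef := by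
  simpa [conjTranspose_eq_transpose_of_trivial] using h.mul_mul_conjTranspose_same X

/-- For an ideal adjacency matrix `A = (PZ)B(PZ)ᵀ` with `N := ZᵀZ`, the
compressed matrices `Ŝ_k := N⁻¹(PZ)ᵀ S_k (PZ) N⁻¹` satisfy `S_k = (PZ) Ŝ_k (PZ)ᵀ`, each
`Ŝ_k` is positive semidefinite, and they obey the recurrence
`Ŝ₁ = B N Bᵀ + Bᵀ N B`, `Ŝ_{k+1} = B N_{k+1} Bᵀ + Bᵀ N_{k+1} B` with
`N_{k+1} = N + β² N Ŝ_k N`. -/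
theorem ideal_compressed_similarity_recurrence (q : ℕ) (m : Fin q → ℕ) (hm : ∀ i, 1 ≤ m i)
    (P : Matrix ((i : Fin q) × Fin (m i)) ((i : Fin q) × Fin (m i)) ℝ)
    (hP : ∃ σ : Equiv.Perm ((i : Fin q) × Fin (m i)), P = σ.permMatrix ℝ)
    (Z : Matrix ((i : Fin q) × Fin (m i)) (Fin q) ℝ)
    (hZ : ∀ i j, Z i j = if i.1 = j then 1 else 0)
    (B : Matrix (Fin q) (Fin q) ℝ)
    (A : Matrix ((i : Fin q) × Fin (m i)) ((i : Fin q) × Fin (m i)) ℝ)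
    (hA : A = (P * Z) * B * (P * Z)ᵀ)
    (β : ℝ)
    (S : ℕ → Matrix ((i : Fin q) × Fin (m i)) ((i : Fin q) × Fin (m i)) ℝ)
    (hS1 : S 1 = A * Aᵀ + Aᵀ * A)
    (hSk : ∀ k, 1 ≤ k →
      S (k + 1) = A * (1 + β ^ 2 • S k) * Aᵀ + Aᵀ * (1 + β ^ 2 • S k) * A)
    (N : Matrix (Fin q) (Fin q) ℝ) (hN : N = Zᵀ * Z)
    (Shat : ℕ → Matrix (Fin q) (Fin q) ℝ)
    (hShat : ∀ k, Shat k = N⁻¹ * (P * Z)ᵀ * S k * (P * Z) * N⁻¹) :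
    (∀ k, 1 ≤ k → S k = (P * Z) * Shat k * (P * Z)ᵀ ∧ (Shat k).PosSemidef) ∧
    Shat 1 = B * N * Bᵀ + Bᵀ * N * B ∧
    (∀ k, 1 ≤ k →
      Shat (k + 1) = B * (N + β ^ 2 • (N * Shat k * N)) * Bᵀ
        + Bᵀ * (N + β ^ 2 • (N * Shat k * N)) * B) := by
  set M := P * Z with hMdef
  -- N is the diagonal matrix of block sizes
  have hNd : N = Matrix.diagonal (fun j => (m j : ℝ)) := by
    rw [hN]
    ext j j'
    rw [Matrix.mul_apply]
    simp only [Matrix.transpose_apply, hZ]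
    rw [← Finset.univ_sigma_univ, Finset.sum_sigma]
    by_cases h : j = j'
    · subst h
      simp [Finset.sum_ite_eq]
    · rw [Matrix.diagonal_apply_ne _ h]
      refine Finset.sum_eq_zero fun a _ => Finset.sum_eq_zero fun b _ => ?_
      by_cases h1 : a = j
      · subst h1
        simp [h]
      · simp [h1]
  have hdet : IsUnit N.det := by
    rw [hNd, Matrix.det_diagonal]
    refine isUnit_iff_ne_zero.mpr (Finset.prod_ne_zero_iff.mpr fun j _ => ?_)
    have := hm j
    positivity
  have hNsymm : Nᵀ = N := by rw [hNd, Matrix.diagonal_transpose]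
  have hNpsd : N.PosSemidef := by
    rw [hNd]
    exact Matrix.PosSemidef.diagonal fun j => by positivity
  -- `PᵀP = 1`
  have hPtP : Pᵀ * P = 1 := by
    obtain ⟨σ, rfl⟩ := hP
    rw [Equiv.Perm.permMatrix, ← PEquiv.toMatrix_symm, ← PEquiv.toMatrix_trans,
      ← Equiv.toPEquiv_symm, ← Equiv.toPEquiv_trans]
    simp
  -- `MᵀM = N`
  have hMtM : Mᵀ * M = N := by
    rw [hMdef, Matrix.transpose_mul, Matrix.mul_assoc, ← Matrix.mul_assoc Pᵀ, hPtP,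
      Matrix.one_mul, hN]
  have hkey : ∀ {p : Type} [Fintype p] (X : Matrix (Fin q) p ℝ), Mᵀ * (M * X) = N * X := by
    intro p _ X
    rw [← Matrix.mul_assoc, hMtM]
  -- compression recovers the middle factor
  have hcompress : ∀ (k : ℕ) (C : Matrix (Fin q) (Fin q) ℝ),
      S k = M * C * Mᵀ → Shat k = C := by
    intro k C h
    rw [hShat, h]
    calc N⁻¹ * Mᵀ * (M * C * Mᵀ) * M * N⁻¹
        = N⁻¹ * (Mᵀ * M) * C * ((Mᵀ * M) * N⁻¹) := by simp only [Matrix.mul_assoc]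
      _ = C := by
          rw [hMtM, Matrix.nonsing_inv_mul _ hdet, Matrix.mul_nonsing_inv _ hdet,
            Matrix.one_mul, Matrix.mul_one]
  have hAT : Aᵀ = M * Bᵀ * Mᵀ := by
    rw [hA]
    simp [Matrix.transpose_mul, Matrix.mul_assoc]
  have hA' : A = M * B * Mᵀ := hA
  -- explicit form of S 1
  have hS1' : S 1 = M * (B * N * Bᵀ + Bᵀ * N * B) * Mᵀ := by
    rw [hS1, hAT, hA']
    simp only [Matrix.mul_add, Matrix.add_mul, Matrix.mul_assoc, hkey]
  have hShat1 : Shat 1 = B * N * Bᵀ + Bᵀ * N * B := hcompress 1 _ hS1'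
  -- recurrence step, assuming representation at k
  have hstep : ∀ k, 1 ≤ k → S k = M * Shat k * Mᵀ →
      S (k + 1) = M * (B * (N + β ^ 2 • (N * Shat k * N)) * Bᵀ
        + Bᵀ * (N + β ^ 2 • (N * Shat k * N)) * B) * Mᵀ := by
    intro k hk hrep
    rw [hSk k hk, hAT, hA', hrep]
    simp only [Matrix.mul_add, Matrix.add_mul, Matrix.mul_one, Matrix.one_mul,
      Matrix.mul_smul, Matrix.smul_mul, Matrix.mul_assoc, hkey, smul_add]
  have hShatStep : ∀ k, 1 ≤ k → S k = M * Shat k * Mᵀ →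
      Shat (k + 1) = B * (N + β ^ 2 • (N * Shat k * N)) * Bᵀ
        + Bᵀ * (N + β ^ 2 • (N * Shat k * N)) * B := fun k hk hrep =>
    hcompress (k + 1) _ (hstep k hk hrep)
  -- PSD of the explicit forms
  have hpsd_form : ∀ (D : Matrix (Fin q) (Fin q) ℝ), D.PosSemidef →
      (B * D * Bᵀ + Bᵀ * D * B).PosSemidef := by
    intro D hD
    have h1 := my_psd_congr hD B
    have h2 := my_psd_congr hD Bᵀ
    rw [Matrix.transpose_transpose] at h2
    exact h1.add h2
  have hNk_psd : ∀ (C : Matrix (Fin q) (Fin q) ℝ), C.PosSemidef →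
      (N + β ^ 2 • (N * C * N)).PosSemidef := by
    intro C hC
    have h1 : (N * C * N).PosSemidef := by
      have := my_psd_congr hC N
      rwa [hNsymm] at this
    exact hNpsd.add (my_psd_smul h1 (by positivity))
  -- main induction
  have main : ∀ k, 1 ≤ k → S k = M * Shat k * Mᵀ ∧ (Shat k).PosSemidef := by
    intro k hk
    induction k, hk using Nat.le_induction with
    | base =>
      refine ⟨?_, ?_⟩
      · rw [hShat1]; exact hS1'
      · rw [hShat1]; exact hpsd_form N hNpsd
    | succ k hk ih =>
      obtain ⟨hrep, hpsd⟩ := ih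
      have h1 := hShatStep k hk hrep
      refine ⟨?_, ?_⟩
      · rw [h1]; exact hstep k hk hrep
      · rw [h1]; exact hpsd_form _ (hNk_psd _ hpsd)
  exact ⟨main, hShat1, fun k hk => hShatStep k hk (main k hk).1⟩
end

section
/- Let A = (PZ)B(PZ)ᵀ be an ideal adjacency matrix with P an n×n permutation matrix, B a q×q real matrix, Z = Diag{z_1, …, z_q} ∈ ℝ^{n×q} block diagonal with z_i the all-ones vector of length n_i ≥ 1, N := ZᵀZ, β ∈ ℝ, S_k the similarity iteration for A, and Ŝ_k := N⁻¹(PZ)ᵀ S_k (PZ) N⁻¹. Then for every k ≥ 1, the column space of Ŝ_k equals the column space of the q×2q compound matrix [B Bᵀ], the column space of S_k equals the image of the column space of [B Bᵀ] under PZ, and rank(S_k) = rank(Ŝ_k) = rank([B Bᵀ]) ≤ q. -/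
open Matrix

lemma myRange_mul_of_surjective {l n p : Type*} [Fintype n] [Fintype p]
    (M : Matrix l n ℝ) (E : Matrix n p ℝ)
    (hE : Function.Surjective E.mulVecLin) :
    LinearMap.range (M * E).mulVecLin = LinearMap.range M.mulVecLin := by
  rw [Matrix.mulVecLin_mul]
  exact LinearMap.range_comp_of_range_eq_top _ (LinearMap.range_eq_top.2 hE)

lemma myRange_mul_transpose_self {l n : Type*} [Fintype l] [Fintype n]
    (M : Matrix l n ℝ) :
    LinearMap.range (M * Mᵀ).mulVecLin = LinearMap.range M.mulVecLin := by
  have hle : LinearMap.range (M * Mᵀ).mulVecLin ≤ LinearMap.range M.mulVecLin := by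
    rw [Matrix.mulVecLin_mul]; exact LinearMap.range_comp_le_range _ _
  have hr : (M * Mᵀ).rank = M.rank := Matrix.rank_self_mul_transpose M
  exact Submodule.eq_of_le_of_finrank_le hle (le_of_eq hr.symm)

lemma myRange_fromColumns {l p p' : Type*} [Fintype p] [Fintype p']
    (X : Matrix l p ℝ) (Y : Matrix l p' ℝ) :
    LinearMap.range (fromCols X Y).mulVecLin
      = LinearMap.range X.mulVecLin ⊔ LinearMap.range Y.mulVecLin := by
  apply le_antisymm
  · rintro _ ⟨w, rfl⟩
    rw [mulVecLin_apply, ← Sum.elim_comp_inl_inr w, fromCols_mulVec_sumElim]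
    exact Submodule.add_mem_sup ⟨_, rfl⟩ ⟨_, rfl⟩
  · rw [sup_le_iff]
    constructor
    · rintro _ ⟨v, rfl⟩
      exact ⟨Sum.elim v 0, by simp [mulVecLin_apply, fromCols_mulVec_sumElim]⟩
    · rintro _ ⟨v, rfl⟩
      exact ⟨Sum.elim 0 v, by simp [mulVecLin_apply, fromCols_mulVec_sumElim]⟩

lemma myPosSemidef_smul {p : Type*} [Fintype p] {M : Matrix p p ℝ} (hM : M.PosSemidef)
    {c : ℝ} (hc : 0 ≤ c) : (c • M).PosSemidef := by
  constructor
  · unfold Matrix.IsHermitian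
    rw [conjTranspose_smul, hM.1]
    simp
  · intro x
    exact (hM.smul hc).2 x

open scoped MatrixOrder in
lemma myRange_key {p : Type*} [Fintype p] [DecidableEq p] (B D : Matrix p p ℝ)
    (hD : D.PosDef) :
    LinearMap.range (B * D * Bᵀ + Bᵀ * D * B).mulVecLin
      = LinearMap.range (fromCols B Bᵀ).mulVecLin := by
  set R := CFC.sqrt D with hR
  have hRR : R * R = D := CFC.sqrt_mul_sqrt_self D hD.posSemidef.nonneg
  have hRsym : Rᵀ = R := by
    have h := (CFC.sqrt_nonneg D).posSemidef.isHermitian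
    rwa [Matrix.IsHermitian, conjTranspose_eq_transpose_of_trivial] at h
  have hRdet : IsUnit R.det := by
    have : IsUnit (R.det * R.det) := by
      rw [← det_mul, hRR]
      exact isUnit_iff_ne_zero.mpr hD.det_pos.ne'
    exact (IsUnit.mul_iff.mp this).1
  have hRsurj : Function.Surjective R.mulVecLin := by
    intro v
    refine ⟨R⁻¹ *ᵥ v, ?_⟩
    rw [mulVecLin_apply, mulVec_mulVec, Matrix.mul_nonsing_inv _ hRdet, one_mulVec]
  have h2 : ∀ X : Matrix p p ℝ, X * R * (R * Xᵀ) = X * D * Xᵀ := by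
    intro X
    rw [Matrix.mul_assoc, ← Matrix.mul_assoc R, hRR, ← Matrix.mul_assoc]
  have hC : B * D * Bᵀ + Bᵀ * D * B
      = fromCols (B * R) (Bᵀ * R) * (fromCols (B * R) (Bᵀ * R))ᵀ := by
    rw [transpose_fromCols, fromCols_mul_fromRows]
    simp only [transpose_mul, hRsym, transpose_transpose]
    have h3 := h2 Bᵀ
    rw [transpose_transpose] at h3
    rw [h2 B, h3]
  rw [hC, myRange_mul_transpose_self, myRange_fromColumns, myRange_fromColumns,
    myRange_mul_of_surjective _ _ hRsurj, myRange_mul_of_surjective _ _ hRsurj]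

/-- For an ideal adjacency matrix `A = (PZ)B(PZ)ᵀ` and the compressed
similarity matrices `Ŝ_k := N⁻¹(PZ)ᵀ S_k (PZ) N⁻¹` (`N := ZᵀZ`), for every `k ≥ 1` the
column space of `Ŝ_k` equals that of the compound matrix `[B Bᵀ]`, the column space of
`S_k` is the image under `PZ` of the column space of `[B Bᵀ]`, and
`rank S_k = rank Ŝ_k = rank [B Bᵀ] ≤ q`. -/
theorem ideal_colSpace_Shat_eq_compound (q : ℕ) (m : Fin q → ℕ) (hm : ∀ i, 1 ≤ m i)
    (P : Matrix ((i : Fin q) × Fin (m i)) ((i : Fin q) × Fin (m i)) ℝ)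
    (hP : ∃ σ : Equiv.Perm ((i : Fin q) × Fin (m i)), P = σ.permMatrix ℝ)
    (Z : Matrix ((i : Fin q) × Fin (m i)) (Fin q) ℝ)
    (hZ : ∀ i j, Z i j = if i.1 = j then 1 else 0)
    (B : Matrix (Fin q) (Fin q) ℝ)
    (A : Matrix ((i : Fin q) × Fin (m i)) ((i : Fin q) × Fin (m i)) ℝ)
    (hA : A = (P * Z) * B * (P * Z)ᵀ)
    (β : ℝ)
    (S : ℕ → Matrix ((i : Fin q) × Fin (m i)) ((i : Fin q) × Fin (m i)) ℝ)
    (hS1 : S 1 = A * Aᵀ + Aᵀ * A)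
    (hSk : ∀ k, 1 ≤ k →
      S (k + 1) = A * (1 + β ^ 2 • S k) * Aᵀ + Aᵀ * (1 + β ^ 2 • S k) * A)
    (N : Matrix (Fin q) (Fin q) ℝ) (hN : N = Zᵀ * Z)
    (Shat : ℕ → Matrix (Fin q) (Fin q) ℝ)
    (hShat : ∀ k, Shat k = N⁻¹ * (P * Z)ᵀ * S k * (P * Z) * N⁻¹) :
    ∀ k, 1 ≤ k →
      LinearMap.range (Shat k).mulVecLin
          = LinearMap.range (Matrix.fromCols B Bᵀ).mulVecLin ∧
      LinearMap.range (S k).mulVecLin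
          = Submodule.map (P * Z).mulVecLin
              (LinearMap.range (Matrix.fromCols B Bᵀ).mulVecLin) ∧
      (S k).rank = (Shat k).rank ∧
      (Shat k).rank = (Matrix.fromCols B Bᵀ).rank ∧
      (Matrix.fromCols B Bᵀ).rank ≤ q := by
  obtain ⟨σ, hPσ⟩ := hP
  set W : Matrix ((i : Fin q) × Fin (m i)) (Fin q) ℝ := P * Z with hW
  have hPt : Pᵀ * P = (1 : Matrix _ _ ℝ) := by
    rw [hPσ, Equiv.Perm.permMatrix, ← PEquiv.toMatrix_symm, ← PEquiv.toMatrix_trans,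
      ← Equiv.toPEquiv_symm, ← Equiv.toPEquiv_trans, Equiv.symm_trans_self,
      Equiv.toPEquiv_refl, PEquiv.toMatrix_refl]
  have hWtW : Wᵀ * W = N := by
    rw [hW, transpose_mul, Matrix.mul_assoc, ← Matrix.mul_assoc Pᵀ, hPt, Matrix.one_mul, hN]
  have hNdiag : N = Matrix.diagonal (fun j => (m j : ℝ)) := by
    rw [hN]
    ext j j'
    rw [Matrix.mul_apply, Matrix.diagonal_apply]
    simp only [transpose_apply, hZ]
    rw [← Finset.univ_sigma_univ, Finset.sum_sigma]
    simp only [mul_ite, mul_one, mul_zero]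
    by_cases h : j = j'
    · subst h
      simp
    · simp only [h, if_false]
      refine Finset.sum_eq_zero fun a _ => Finset.sum_eq_zero fun b _ => ?_
      by_cases ha : a = j <;> simp [ha, h]
  have hNpd : N.PosDef := by
    rw [hNdiag]
    exact Matrix.posDef_diagonal_iff.mpr fun j => by exact_mod_cast hm j
  have hNdet : IsUnit N.det := isUnit_iff_ne_zero.mpr hNpd.det_pos.ne'
  have hNinv : N⁻¹ * N = 1 := Matrix.nonsing_inv_mul N hNdet
  have hNinv' : N * N⁻¹ = 1 := Matrix.mul_nonsing_inv N hNdet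
  have hNsym : Nᵀ = N := by rw [hNdiag, diagonal_transpose]
  have hWtsurj : Function.Surjective Wᵀ.mulVecLin := by
    intro v
    refine ⟨W *ᵥ (N⁻¹ *ᵥ v), ?_⟩
    rw [mulVecLin_apply, mulVec_mulVec, hWtW, mulVec_mulVec, hNinv', one_mulVec]
  have hWinj : Function.Injective W.mulVecLin := by
    rw [← LinearMap.ker_eq_bot, LinearMap.ker_eq_bot']
    intro x hx
    rw [mulVecLin_apply] at hx
    have h1 : N *ᵥ x = 0 := by rw [← hWtW, ← mulVec_mulVec, hx, mulVec_zero]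
    calc x = (N⁻¹ * N) *ᵥ x := by rw [hNinv, one_mulVec]
    _ = N⁻¹ *ᵥ (N *ᵥ x) := (mulVec_mulVec _ _ _).symm
    _ = 0 := by rw [h1, mulVec_zero]
  have hAt : Aᵀ = W * Bᵀ * Wᵀ := by
    rw [hA]; simp only [transpose_mul, transpose_transpose, Matrix.mul_assoc]
  have hsand : ∀ (X Y : Matrix (Fin q) (Fin q) ℝ)
      (E' : Matrix ((i : Fin q) × Fin (m i)) ((i : Fin q) × Fin (m i)) ℝ),
      (W * X * Wᵀ) * E' * (W * Y * Wᵀ) = W * (X * (Wᵀ * E' * W) * Y) * Wᵀ := by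
    intro X Y E'
    simp only [Matrix.mul_assoc]
  have haddW : ∀ U V : Matrix (Fin q) (Fin q) ℝ,
      W * U * Wᵀ + W * V * Wᵀ = W * (U + V) * Wᵀ := by
    intro U V
    rw [Matrix.mul_add, Matrix.add_mul]
  have key : ∀ k, 1 ≤ k → ∃ D : Matrix (Fin q) (Fin q) ℝ, D.PosDef ∧
      S k = W * (B * D * Bᵀ + Bᵀ * D * B) * Wᵀ := by
    intro k hk
    induction k, hk using Nat.le_induction with
    | base =>
      refine ⟨N, hNpd, ?_⟩
      have h1 : A * Aᵀ = W * (B * N * Bᵀ) * Wᵀ := by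
        have := hsand B Bᵀ 1
        simp only [Matrix.mul_one] at this; rw [hWtW] at this
        rw [hAt, hA, ← this, Matrix.mul_assoc]
      have h2 : Aᵀ * A = W * (Bᵀ * N * B) * Wᵀ := by
        have := hsand Bᵀ B 1
        simp only [Matrix.mul_one] at this; rw [hWtW] at this
        rw [hAt, hA, ← this, Matrix.mul_assoc]
      rw [hS1, h1, h2, haddW]
    | succ k hk ih =>
      obtain ⟨D, hDpd, hSkeq⟩ := ih
      have hCpsd : (B * D * Bᵀ + Bᵀ * D * B).PosSemidef := by
        have h1 := hDpd.posSemidef.mul_mul_conjTranspose_same B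
        rw [conjTranspose_eq_transpose_of_trivial] at h1
        have h2 := hDpd.posSemidef.mul_mul_conjTranspose_same Bᵀ
        rw [conjTranspose_eq_transpose_of_trivial, transpose_transpose] at h2
        exact h1.add h2
      have hNCN : (N * (B * D * Bᵀ + Bᵀ * D * B) * N).PosSemidef := by
        have := hCpsd.conjTranspose_mul_mul_same N
        rwa [conjTranspose_eq_transpose_of_trivial, hNsym] at this
      refine ⟨N + β ^ 2 • (N * (B * D * Bᵀ + Bᵀ * D * B) * N),
        hNpd.add_posSemidef (myPosSemidef_smul hNCN (sq_nonneg β)), ?_⟩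
      have hE : Wᵀ * (1 + β ^ 2 • (W * (B * D * Bᵀ + Bᵀ * D * B) * Wᵀ)) * W
          = N + β ^ 2 • (N * (B * D * Bᵀ + Bᵀ * D * B) * N) := by
        rw [Matrix.mul_add, Matrix.mul_one, Matrix.add_mul, hWtW]
        congr 1
        rw [Matrix.mul_smul, Matrix.smul_mul]
        congr 1
        simp only [Matrix.mul_assoc]
        rw [← Matrix.mul_assoc Wᵀ W, hWtW]
      rw [hSk k hk, hSkeq, hAt, hA, hsand, hsand, hE, haddW]
  intro k hk
  obtain ⟨D, hDpd, hSkeq⟩ := key k hk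
  have hrangeC : LinearMap.range (B * D * Bᵀ + Bᵀ * D * B).mulVecLin
      = LinearMap.range (fromCols B Bᵀ).mulVecLin := myRange_key B D hDpd
  have hShatC : Shat k = B * D * Bᵀ + Bᵀ * D * B := by
    rw [hShat k, hSkeq]
    simp only [Matrix.mul_assoc]
    rw [← Matrix.mul_assoc Wᵀ W, hWtW, ← Matrix.mul_assoc Wᵀ W, hWtW, hNinv',
      Matrix.mul_one, ← Matrix.mul_assoc N⁻¹ N, hNinv, Matrix.one_mul]
  have hrS : LinearMap.range (S k).mulVecLin
      = Submodule.map W.mulVecLin (LinearMap.range (fromCols B Bᵀ).mulVecLin) := by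
    rw [hSkeq, Matrix.mul_assoc, Matrix.mulVecLin_mul, LinearMap.range_comp,
      myRange_mul_of_surjective _ Wᵀ hWtsurj, hrangeC]
  refine ⟨?_, ?_, ?_, ?_, ?_⟩
  · rw [hShatC]; exact hrangeC
  · exact hrS
  · simp only [Matrix.rank]
    rw [hrS, hShatC, hrangeC]
    exact ((Submodule.equivMapOfInjective W.mulVecLin hWinj _).finrank_eq).symm
  · rw [hShatC]
    simp only [Matrix.rank]
    rw [hrangeC]
  · exact le_trans (Matrix.rank_le_card_height _) (le_of_eq (Fintype.card_fin q))
end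

section
/- Let B be a q×q real matrix, N a q×q diagonal matrix with strictly positive diagonal entries, β ∈ ℝ, and define Ŝ_1 = B N Bᵀ + Bᵀ N B and Ŝ_k = B N_k Bᵀ + Bᵀ N_k B for k > 1 with N_k = N + β² N Ŝ_{k−1} N. Then for every k ≥ 1, the kernel of Ŝ_k equals the set of vectors x ∈ ℝ^q with Bᵀx = 0 and Bx = 0 (i.e., the kernel of the stacked matrix [Bᵀ; B]). -/
open Matrix

lemma sandwich_psd {q : ℕ} (B M : Matrix (Fin q) (Fin q) ℝ) (hM : M.PosSemidef) :
    (B * M * Bᵀ + Bᵀ * M * B).PosSemidef := by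
  have h1 := hM.mul_mul_conjTranspose_same B
  have h2 := hM.conjTranspose_mul_mul_same B
  rw [conjTranspose_eq_transpose_of_trivial] at h1 h2
  exact h1.add h2

lemma sandwich_ker {q : ℕ} (B M : Matrix (Fin q) (Fin q) ℝ) (hM : M.PosDef) :
    LinearMap.ker (B * M * Bᵀ + Bᵀ * M * B).mulVecLin
      = LinearMap.ker Bᵀ.mulVecLin ⊓ LinearMap.ker B.mulVecLin := by
  ext x
  simp only [LinearMap.mem_ker, Submodule.mem_inf, mulVecLin_apply]
  constructor
  · intro hx
    have hq : x ⬝ᵥ (B * M * Bᵀ + Bᵀ * M * B) *ᵥ x = 0 := by rw [hx, dotProduct_zero]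
    have e1 : x ⬝ᵥ (B * M * Bᵀ) *ᵥ x = (Bᵀ *ᵥ x) ⬝ᵥ M *ᵥ (Bᵀ *ᵥ x) := by
      rw [← mulVec_mulVec, ← mulVec_mulVec, dotProduct_mulVec, mulVec_transpose]
    have e2 : x ⬝ᵥ (Bᵀ * M * B) *ᵥ x = (B *ᵥ x) ⬝ᵥ M *ᵥ (B *ᵥ x) := by
      rw [← mulVec_mulVec, ← mulVec_mulVec, dotProduct_mulVec, vecMul_transpose]
    rw [add_mulVec, dotProduct_add, e1, e2] at hq
    have n1 : (0 : ℝ) ≤ (Bᵀ *ᵥ x) ⬝ᵥ M *ᵥ (Bᵀ *ᵥ x) := by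
      simpa using hM.posSemidef.dotProduct_mulVec_nonneg (Bᵀ *ᵥ x)
    have n2 : (0 : ℝ) ≤ (B *ᵥ x) ⬝ᵥ M *ᵥ (B *ᵥ x) := by
      simpa using hM.posSemidef.dotProduct_mulVec_nonneg (B *ᵥ x)
    have z1 : (Bᵀ *ᵥ x) ⬝ᵥ M *ᵥ (Bᵀ *ᵥ x) = 0 := by linarith
    have z2 : (B *ᵥ x) ⬝ᵥ M *ᵥ (B *ᵥ x) = 0 := by linarith
    constructor
    · by_contra h
      have := hM.dotProduct_mulVec_pos h
      simp only [star_trivial] at this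
      linarith
    · by_contra h
      have := hM.dotProduct_mulVec_pos h
      simp only [star_trivial] at this
      linarith
  · rintro ⟨h1, h2⟩
    simp [add_mulVec, ← mulVec_mulVec, h1, h2]

/-- For the compressed similarity iteration `Ŝ₁ = B N Bᵀ + Bᵀ N B`,
`Ŝ_{k+1} = B N_{k+1} Bᵀ + Bᵀ N_{k+1} B` with `N_{k+1} = N + β² N Ŝ_k N`, where `N` is
diagonal with strictly positive diagonal entries, the kernel of every `Ŝ_k` (`k ≥ 1`)
equals the set of `x` with `Bᵀ x = 0` and `B x = 0`. -/
theorem compressed_ker_eq_ker_inter (q : ℕ) (B : Matrix (Fin q) (Fin q) ℝ)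
    (N : Matrix (Fin q) (Fin q) ℝ)
    (hNdiag : ∀ i j, i ≠ j → N i j = 0) (hNpos : ∀ i, 0 < N i i)
    (β : ℝ)
    (Shat : ℕ → Matrix (Fin q) (Fin q) ℝ)
    (hShat1 : Shat 1 = B * N * Bᵀ + Bᵀ * N * B)
    (hShatk : ∀ k, 1 ≤ k →
      Shat (k + 1) = B * (N + β ^ 2 • (N * Shat k * N)) * Bᵀ
        + Bᵀ * (N + β ^ 2 • (N * Shat k * N)) * B) :
    ∀ k, 1 ≤ k →
      LinearMap.ker (Shat k).mulVecLin
        = LinearMap.ker Bᵀ.mulVecLin ⊓ LinearMap.ker B.mulVecLin := by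
  have hNeq : N = diagonal (fun i => N i i) := by
    ext i j
    by_cases h : i = j
    · subst h; simp
    · rw [diagonal_apply_ne _ h]; exact hNdiag i j h
  have hNpd : N.PosDef := by rw [hNeq]; exact PosDef.diagonal hNpos
  -- key: Shat k is PSD and has the right kernel, by induction
  have key : ∀ k, 1 ≤ k → (Shat k).PosSemidef ∧
      LinearMap.ker (Shat k).mulVecLin
        = LinearMap.ker Bᵀ.mulVecLin ⊓ LinearMap.ker B.mulVecLin := by
    intro k hk
    induction k with
    | zero => omega
    | succ k ih =>
      by_cases hk1 : 1 ≤ k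
      · obtain ⟨hpsd, _⟩ := ih hk1
        -- Nₖ₊₁ = N + β² • (N * Shat k * N) is positive definite
        have hNsymm : Nᵀ = N := by rw [hNeq, diagonal_transpose]
        have hNSN : (N * Shat k * N).PosSemidef := by
          have := hpsd.conjTranspose_mul_mul_same N
          rwa [conjTranspose_eq_transpose_of_trivial, hNsymm] at this
        have hMpd : (N + β ^ 2 • (N * Shat k * N)).PosDef := by
          refine posDef_iff_dotProduct_mulVec.mpr ⟨?_, fun x hx => ?_⟩
          · refine hNpd.isHermitian.add ?_
            have h := hNSN.isHermitian
            unfold Matrix.IsHermitian at h ⊢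
            rw [conjTranspose_smul, star_trivial, h]
          · rw [add_mulVec, dotProduct_add, smul_mulVec, dotProduct_smul]
            have h1 : 0 < x ⬝ᵥ N *ᵥ x := by simpa using hNpd.dotProduct_mulVec_pos hx
            have h2 : 0 ≤ x ⬝ᵥ (N * Shat k * N) *ᵥ x := by simpa using hNSN.dotProduct_mulVec_nonneg x
            have : (0:ℝ) ≤ β ^ 2 • (x ⬝ᵥ (N * Shat k * N) *ᵥ x) := by
              exact smul_nonneg (sq_nonneg β) h2
            simpa using add_pos_of_pos_of_nonneg h1 this
        rw [hShatk k hk1]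
        exact ⟨sandwich_psd B _ hMpd.posSemidef, sandwich_ker B _ hMpd⟩
      · have : k = 0 := by omega
        subst this
        rw [hShat1]
        exact ⟨sandwich_psd B N hNpd.posSemidef, sandwich_ker B N hNpd⟩
  exact fun k hk => (key k hk).2
end

section
/- Let B be a q×q real matrix that is a minimal role matrix, i.e., no two rows of the compound matrix [B Bᵀ] are linearly dependent (in particular no row of [B Bᵀ] is zero). Let N be a q×q diagonal matrix with strictly positive entries, β ∈ ℝ, and let Ŝ_k be the compressed similarity iteration. If Ŝ_k = V Vᵀ is a rank factorization with V ∈ ℝ^{q×r} and r = rank(Ŝ_k), then every row of V is nonzero, and no two distinct rows of V are scalar multiples of each other. -/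
open Matrix

private lemma quad_form_eq (q : ℕ) (M : Matrix (Fin q) (Fin q) ℝ)
    (B : Matrix (Fin q) (Fin q) ℝ) (x : Fin q → ℝ) :
    x ⬝ᵥ ((B * M * Bᵀ) *ᵥ x) = (Bᵀ *ᵥ x) ⬝ᵥ (M *ᵥ (Bᵀ *ᵥ x)) := by
  rw [← mulVec_mulVec, ← mulVec_mulVec, dotProduct_mulVec, ← mulVec_transpose]

private def combVec (q : ℕ) (i j : Fin q) (c : ℝ) : Fin q → ℝ :=
  fun l => (if l = i then (1 : ℝ) else 0) - c * (if l = j then 1 else 0)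

private lemma mulVec_comb (q r : ℕ) (W : Matrix (Fin q) (Fin r) ℝ) (i j : Fin q) (c : ℝ) :
    Wᵀ *ᵥ (combVec q i j c) = fun m => W i m - c * W j m := by
  funext m
  simp only [mulVec, dotProduct, Matrix.transpose_apply, combVec]
  have : ∀ l, W l m * ((if l = i then (1 : ℝ) else 0) - c * (if l = j then 1 else 0))
      = (if l = i then W l m else 0) - c * (if l = j then W l m else 0) := by
    intro l
    split_ifs <;> ring
  simp_rw [this, Finset.sum_sub_distrib, ← Finset.mul_sum,
    Finset.sum_ite_eq' Finset.univ i (fun l => W l m),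
    Finset.sum_ite_eq' Finset.univ j (fun l => W l m)]
  simp

/-- Suppose `B` is a minimal role matrix: no row of the compound matrix
`[B Bᵀ]` is zero and no two distinct rows of `[B Bᵀ]` are linearly dependent. For the
compressed similarity iteration with diagonal positive `N`, if `Ŝ_k = V Vᵀ` is a rank
factorization (`V ∈ ℝ^{q×r}`, `r = rank Ŝ_k`), then every row of `V` is nonzero and no
two distinct rows of `V` are scalar multiples of each other. -/
theorem minimal_rankFactor_rows_nonzero_nonparallel (q : ℕ)
    (B : Matrix (Fin q) (Fin q) ℝ)
    (hBrow : ∀ i, (Matrix.fromCols B Bᵀ) i ≠ 0)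
    (hBmin : ∀ i j, i ≠ j → ∀ c d : ℝ,
      c • (Matrix.fromCols B Bᵀ) i + d • (Matrix.fromCols B Bᵀ) j = 0 →
        c = 0 ∧ d = 0)
    (N : Matrix (Fin q) (Fin q) ℝ)
    (hNdiag : ∀ i j, i ≠ j → N i j = 0) (hNpos : ∀ i, 0 < N i i)
    (β : ℝ)
    (Shat : ℕ → Matrix (Fin q) (Fin q) ℝ)
    (hShat1 : Shat 1 = B * N * Bᵀ + Bᵀ * N * B)
    (hShatk : ∀ k, 1 ≤ k →
      Shat (k + 1) = B * (N + β ^ 2 • (N * Shat k * N)) * Bᵀ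
        + Bᵀ * (N + β ^ 2 • (N * Shat k * N)) * B)
    (k : ℕ) (hk : 1 ≤ k)
    (r : ℕ) (V : Matrix (Fin q) (Fin r) ℝ)
    (hV : Shat k = V * Vᵀ) (hr : r = (Shat k).rank) :
    (∀ i, V i ≠ 0) ∧ ∀ i j, i ≠ j → ¬∃ c : ℝ, V i = c • V j := by
  -- N is positive definite
  have hN : N = Matrix.diagonal (fun i => N i i) := by
    ext i j
    by_cases h : i = j
    · subst h; simp
    · simp [Matrix.diagonal_apply_ne _ h, hNdiag i j h]
  have hNpd : N.PosDef := by
    rw [hN]; exact (Matrix.posDef_diagonal_iff).mpr hNpos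
  have hNT : Nᵀ = N := by rw [hN]; exact Matrix.diagonal_transpose _
  -- existence of a positive definite M with Shat k = B M Bᵀ + Bᵀ M B
  have hM : ∀ m, 1 ≤ m → ∃ M : Matrix (Fin q) (Fin q) ℝ,
      M.PosDef ∧ Shat m = B * M * Bᵀ + Bᵀ * M * B := by
    intro m hm
    induction m, hm using Nat.le_induction with
    | base => exact ⟨N, hNpd, hShat1⟩
    | succ n hn ih =>
      obtain ⟨M, hMpd, hMeq⟩ := ih
      refine ⟨N + β ^ 2 • (N * Shat n * N), ?_, hShatk n hn⟩
      have hSpsd : (Shat n).PosSemidef := by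
        rw [hMeq]
        have h1 : (B * M * Bᵀ).PosSemidef := by
          have := hMpd.posSemidef.mul_mul_conjTranspose_same B
          rwa [conjTranspose_eq_transpose_of_trivial] at this
        have h2 : (Bᵀ * M * B).PosSemidef := by
          have := hMpd.posSemidef.mul_mul_conjTranspose_same Bᵀ
          rwa [conjTranspose_eq_transpose_of_trivial, transpose_transpose] at this
        exact h1.add h2
      have key : β ^ 2 • (N * Shat n * N) = (β • N) * Shat n * (β • N)ᴴ := by
        rw [conjTranspose_eq_transpose_of_trivial, transpose_smul, hNT]
        rw [Matrix.smul_mul, Matrix.mul_smul, Matrix.smul_mul, smul_smul, sq]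
      refine hNpd.add_posSemidef ?_
      rw [key]
      exact hSpsd.mul_mul_conjTranspose_same (β • N)
  obtain ⟨M, hMpd, hMeq⟩ := hM k hk
  -- key step: if Vᵀ *ᵥ x = 0 then Bᵀ *ᵥ x = 0 and B *ᵥ x = 0
  have key : ∀ x : Fin q → ℝ, Vᵀ *ᵥ x = 0 → Bᵀ *ᵥ x = 0 ∧ B *ᵥ x = 0 := by
    intro x hx
    have h0 : x ⬝ᵥ (Shat k *ᵥ x) = 0 := by
      rw [hV, ← mulVec_mulVec, hx, mulVec_zero, dotProduct_zero]
    rw [hMeq, add_mulVec, dotProduct_add, quad_form_eq] at h0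
    have h2 : x ⬝ᵥ ((Bᵀ * M * B) *ᵥ x) = (B *ᵥ x) ⬝ᵥ (M *ᵥ (B *ᵥ x)) := by
      have := quad_form_eq q M Bᵀ x
      rwa [transpose_transpose] at this
    rw [h2] at h0
    have n1 : 0 ≤ (Bᵀ *ᵥ x) ⬝ᵥ (M *ᵥ (Bᵀ *ᵥ x)) := by simpa using hMpd.posSemidef.dotProduct_mulVec_nonneg (Bᵀ *ᵥ x)
    have n2 : 0 ≤ (B *ᵥ x) ⬝ᵥ (M *ᵥ (B *ᵥ x)) := by simpa using hMpd.posSemidef.dotProduct_mulVec_nonneg (B *ᵥ x)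
    constructor
    · by_contra hne
      have := hMpd.dotProduct_mulVec_pos (x := Bᵀ *ᵥ x) hne
      simp only [star_trivial] at this
      linarith
    · by_contra hne
      have := hMpd.dotProduct_mulVec_pos (x := B *ᵥ x) hne
      simp only [star_trivial] at this
      linarith
  constructor
  · -- rows nonzero
    intro i hVi
    have hVx := mulVec_comb q r V i i 0
    have hx : Vᵀ *ᵥ (combVec q i i 0) = 0 := by
      rw [hVx]
      funext m
      have := congrFun hVi m
      simp only [Pi.zero_apply] at this ⊢
      rw [this]; ring
    obtain ⟨h1, h2⟩ := key _ hx
    rw [mulVec_comb] at h1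
    have hB2 := mulVec_comb q q Bᵀ i i 0
    rw [transpose_transpose] at hB2
    rw [hB2] at h2
    apply hBrow i
    funext m
    cases m with
    | inl a =>
      have := congrFun h1 a
      simp only [Pi.zero_apply] at this ⊢
      rw [fromCols_apply_inl]
      linarith
    | inr a =>
      have := congrFun h2 a
      simp only [Pi.zero_apply, Matrix.transpose_apply] at this ⊢
      rw [fromCols_apply_inr]
      simp only [Matrix.transpose_apply]
      linarith
  · -- no two rows parallel
    rintro i j hij ⟨c, hc⟩
    have hVx := mulVec_comb q r V i j c
    have hx : Vᵀ *ᵥ (combVec q i j c) = 0 := by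
      rw [hVx]
      funext m
      have := congrFun hc m
      simp only [Pi.smul_apply, smul_eq_mul, Pi.zero_apply] at this ⊢
      rw [this]; ring
    obtain ⟨h1, h2⟩ := key _ hx
    rw [mulVec_comb] at h1
    have hB2 := mulVec_comb q q Bᵀ i j c
    rw [transpose_transpose] at hB2
    rw [hB2] at h2
    have : (1 : ℝ) = 0 ∧ (-c) = 0 := by
      apply hBmin i j hij
      funext m
      cases m with
      | inl a =>
        have := congrFun h1 a
        simp only [Pi.zero_apply] at this ⊢
        simp only [Pi.add_apply, Pi.smul_apply, fromCols_apply_inl, smul_eq_mul]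
        linarith
      | inr a =>
        have := congrFun h2 a
        simp only [Pi.zero_apply, Matrix.transpose_apply] at this ⊢
        simp only [Pi.add_apply, Pi.smul_apply, fromCols_apply_inr, smul_eq_mul,
          Matrix.transpose_apply]
        linarith
    exact one_ne_zero this.1
end

section
/- Let A = (PZ)B(PZ)ᵀ be an ideal adjacency matrix where B is a minimal q×q role matrix, P is an n×n permutation matrix, and Z = Diag{z_1, …, z_q} ∈ ℝ^{n×q} is block diagonal with z_i the all-ones vector of length n_i ≥ 1. Let Ŝ_k = V_k V_kᵀ be a rank factorization with V_k ∈ ℝ^{q×r}, r = rank(Ŝ_k) ≤ q. Then S_k = (PZV_k)(PZV_k)ᵀ, and two rows of the n×r matrix ZV_k are parallel (each a nonzero scalar multiple of the other) if and only if the corresponding row indices lie in the same diagonal block of Z; hence the rows of PZV_k form exactly q clusters of mutually parallel nonzero vectors, one cluster per role. -/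
open Matrix

private lemma aux_conj {ι κ n : Type*} [Fintype ι] [Fintype n]
    (Q : Matrix ι n ℝ) (N : Matrix n n ℝ) (hQ : Qᵀ * Q = N) (X : Matrix n κ ℝ) :
    Qᵀ * (Q * X) = N * X := by
  rw [← Matrix.mul_assoc, hQ]

private lemma aux_psd_smul {n : Type*} [Fintype n] {A : Matrix n n ℝ}
    (h : A.PosSemidef) {c : ℝ} (hc : 0 ≤ c) : (c • A).PosSemidef := by
  constructor
  · unfold Matrix.IsHermitian
    rw [conjTranspose_smul, h.1, star_trivial]
  · intro x
    exact (h.smul hc).2 x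

/-- Let `A = (PZ)B(PZ)ᵀ` be an ideal adjacency matrix with `B` a minimal
role matrix (no row of `[B Bᵀ]` is zero and no two distinct rows of `[B Bᵀ]` are
linearly dependent), where nodes are indexed by the sigma type `Σ i : Fin q, Fin (m i)`
(block `i` has size `m i ≥ 1`). If `Ŝ_k = V Vᵀ` is a rank factorization of the
compressed similarity matrix `Ŝ_k := N⁻¹(PZ)ᵀ S_k (PZ) N⁻¹` (`N := ZᵀZ`), then
`S_k = (PZV)(PZV)ᵀ`, every row of `ZV` is nonzero, and two rows of `ZV` are parallel
(one a nonzero multiple of the other) iff they belong to the same diagonal block of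
`Z`; hence the rows of `PZV` form exactly `q` clusters of mutually parallel nonzero
vectors, one per role. -/
theorem ideal_lowRankFactor_clusters (q : ℕ) (m : Fin q → ℕ) (hm : ∀ i, 1 ≤ m i)
    (P : Matrix ((i : Fin q) × Fin (m i)) ((i : Fin q) × Fin (m i)) ℝ)
    (hP : ∃ σ : Equiv.Perm ((i : Fin q) × Fin (m i)), P = σ.permMatrix ℝ)
    (Z : Matrix ((i : Fin q) × Fin (m i)) (Fin q) ℝ)
    (hZ : ∀ i j, Z i j = if i.1 = j then 1 else 0)
    (B : Matrix (Fin q) (Fin q) ℝ)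
    (hBrow : ∀ i, (Matrix.fromCols B Bᵀ) i ≠ 0)
    (hBmin : ∀ i j, i ≠ j → ∀ c d : ℝ,
      c • (Matrix.fromCols B Bᵀ) i + d • (Matrix.fromCols B Bᵀ) j = 0 →
        c = 0 ∧ d = 0)
    (A : Matrix ((i : Fin q) × Fin (m i)) ((i : Fin q) × Fin (m i)) ℝ)
    (hA : A = (P * Z) * B * (P * Z)ᵀ)
    (β : ℝ)
    (S : ℕ → Matrix ((i : Fin q) × Fin (m i)) ((i : Fin q) × Fin (m i)) ℝ)
    (hS1 : S 1 = A * Aᵀ + Aᵀ * A)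
    (hSk : ∀ k, 1 ≤ k →
      S (k + 1) = A * (1 + β ^ 2 • S k) * Aᵀ + Aᵀ * (1 + β ^ 2 • S k) * A)
    (N : Matrix (Fin q) (Fin q) ℝ) (hN : N = Zᵀ * Z)
    (Shat : ℕ → Matrix (Fin q) (Fin q) ℝ)
    (hShat : ∀ k, Shat k = N⁻¹ * (P * Z)ᵀ * S k * (P * Z) * N⁻¹)
    (k : ℕ) (hk : 1 ≤ k)
    (r : ℕ) (V : Matrix (Fin q) (Fin r) ℝ)
    (hV : Shat k = V * Vᵀ) (hr : r = (Shat k).rank) :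
    S k = (P * Z * V) * (P * Z * V)ᵀ ∧
    (∀ i, (Z * V) i ≠ 0) ∧
    ∀ i i' : (i : Fin q) × Fin (m i),
      (∃ c : ℝ, c ≠ 0 ∧ (Z * V) i' = c • (Z * V) i) ↔ i.1 = i'.1 := by
  obtain ⟨σ, hPσ⟩ := hP
  have hPT : Pᵀ * P = 1 := by
    rw [hPσ, Equiv.Perm.permMatrix, ← PEquiv.toMatrix_symm, ← PEquiv.toMatrix_trans,
      ← Equiv.toPEquiv_symm, ← Equiv.toPEquiv_trans, Equiv.symm_trans_self,
      Equiv.toPEquiv_refl, PEquiv.toMatrix_refl]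
  set Q := P * Z with hQdef
  have hQ : Qᵀ * Q = N := by
    rw [hQdef, transpose_mul, Matrix.mul_assoc, ← Matrix.mul_assoc Pᵀ P Z, hPT,
      Matrix.one_mul, hN]
  have hNdiag : N = Matrix.diagonal (fun i => (m i : ℝ)) := by
    rw [hN]; ext i j
    simp only [mul_apply, transpose_apply, hZ]
    rw [← Finset.univ_sigma_univ, Finset.sum_sigma]
    by_cases h : i = j
    · subst h; simp [diagonal]
    · simp only [diagonal, h, ite_and, apply_ite, of_apply]
      simp [h, ite_and]
      intro a; exact absurd a.symm h
  have hNpd : N.PosDef := by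
    rw [hNdiag]
    exact Matrix.posDef_diagonal_iff.mpr fun i => by exact_mod_cast hm i
  have hNunit : IsUnit N.det := by
    rw [hNdiag, det_diagonal]
    refine isUnit_iff_ne_zero.mpr (Finset.prod_ne_zero_iff.mpr fun i _ => ?_)
    exact_mod_cast Nat.one_le_iff_ne_zero.mp (hm i)
  have hNN : N * N⁻¹ = 1 := Matrix.mul_nonsing_inv N hNunit
  have hNN' : N⁻¹ * N = 1 := Matrix.nonsing_inv_mul N hNunit
  have hNsymm : Nᵀ = N := by rw [hNdiag, diagonal_transpose]
  have hA' : A = Q * B * Qᵀ := hA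
  have hAT : Aᵀ = Q * Bᵀ * Qᵀ := by
    rw [hA']
    simp only [transpose_mul, transpose_transpose, Matrix.mul_assoc]
  have key : ∀ j, 1 ≤ j → ∃ D : Matrix (Fin q) (Fin q) ℝ, D.PosDef ∧
      S j = Q * (B * D * Bᵀ + Bᵀ * D * B) * Qᵀ := by
    intro j hj
    induction j, hj using Nat.le_induction with
    | base =>
      refine ⟨N, hNpd, ?_⟩
      rw [hS1, hAT, hA']
      simp only [Matrix.mul_add, Matrix.add_mul, Matrix.mul_assoc, aux_conj Q N hQ]
    | succ n hn ih =>
      obtain ⟨D, hD, hSn⟩ := ih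
      set M := B * D * Bᵀ + Bᵀ * D * B with hMdef
      have hM1 : (B * D * Bᵀ).PosSemidef := by
        have := hD.posSemidef.mul_mul_conjTranspose_same B
        rwa [conjTranspose_eq_transpose_of_trivial] at this
      have hM2 : (Bᵀ * D * B).PosSemidef := by
        have := hD.posSemidef.mul_mul_conjTranspose_same Bᵀ
        rwa [conjTranspose_eq_transpose_of_trivial, transpose_transpose] at this
      have hMpsd : M.PosSemidef := hM1.add hM2
      have hNMN : (N * M * N).PosSemidef := by
        have := hMpsd.mul_mul_conjTranspose_same N
        rwa [conjTranspose_eq_transpose_of_trivial, hNsymm] at this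
      refine ⟨N + β ^ 2 • (N * M * N), ?_, ?_⟩
      · exact hNpd.add_posSemidef (aux_psd_smul hNMN (sq_nonneg β))
      · rw [hSk n hn, hSn, hAT, hA']
        simp only [Matrix.mul_add, Matrix.add_mul, Matrix.mul_one, Matrix.one_mul,
          Matrix.mul_smul, Matrix.smul_mul, Matrix.mul_assoc, aux_conj Q N hQ]
  obtain ⟨D, hD, hSkEq⟩ := key k hk
  have hShatk : Shat k = B * D * Bᵀ + Bᵀ * D * B := by
    rw [hShat k, hSkEq]
    show N⁻¹ * Qᵀ * (Q * (B * D * Bᵀ + Bᵀ * D * B) * Qᵀ) * Q * N⁻¹ = _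
    simp only [Matrix.mul_assoc, aux_conj Q N hQ, hNN, Matrix.mul_one]
    rw [← Matrix.mul_assoc, hNN', Matrix.one_mul]
  have hMV : B * D * Bᵀ + Bᵀ * D * B = V * Vᵀ := hShatk.symm.trans hV
  have quad : ∀ u : Fin q → ℝ, Vᵀ *ᵥ u = 0 → u ᵥ* B = 0 ∧ B *ᵥ u = 0 := by
    intro u hu
    have h0 : u ⬝ᵥ ((B * D * Bᵀ + Bᵀ * D * B) *ᵥ u) = 0 := by
      rw [hMV, ← Matrix.mulVec_mulVec, hu, Matrix.mulVec_zero, dotProduct_zero]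
    have e1 : u ⬝ᵥ ((B * D * Bᵀ) *ᵥ u) = (Bᵀ *ᵥ u) ⬝ᵥ (D *ᵥ (Bᵀ *ᵥ u)) := by
      rw [← Matrix.mulVec_mulVec, ← Matrix.mulVec_mulVec, Matrix.dotProduct_mulVec,
        ← Matrix.mulVec_transpose]
    have e2 : u ⬝ᵥ ((Bᵀ * D * B) *ᵥ u) = (B *ᵥ u) ⬝ᵥ (D *ᵥ (B *ᵥ u)) := by
      rw [← Matrix.mulVec_mulVec, ← Matrix.mulVec_mulVec, Matrix.dotProduct_mulVec,
        Matrix.vecMul_transpose]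
    rw [Matrix.add_mulVec, dotProduct_add, e1, e2] at h0
    have n1 : 0 ≤ (Bᵀ *ᵥ u) ⬝ᵥ (D *ᵥ (Bᵀ *ᵥ u)) := by
      have := hD.posSemidef.dotProduct_mulVec_nonneg (Bᵀ *ᵥ u); rwa [star_trivial] at this
    have n2 : 0 ≤ (B *ᵥ u) ⬝ᵥ (D *ᵥ (B *ᵥ u)) := by
      have := hD.posSemidef.dotProduct_mulVec_nonneg (B *ᵥ u); rwa [star_trivial] at this
    have z1 : Bᵀ *ᵥ u = 0 := by
      by_contra hne
      have := hD.dotProduct_mulVec_pos hne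
      rw [star_trivial] at this
      linarith
    have z2 : B *ᵥ u = 0 := by
      by_contra hne
      have := hD.dotProduct_mulVec_pos hne
      rw [star_trivial] at this
      linarith
    exact ⟨by rwa [← Matrix.mulVec_transpose], z2⟩
  have hZV : ∀ i : (i : Fin q) × Fin (m i), (Z * V) i = V i.1 := by
    intro i; funext j; simp [mul_apply, hZ, ite_mul]
  have hVrow : ∀ t : Fin q, V t ≠ 0 := by
    intro t ht
    have hu : Vᵀ *ᵥ (Pi.single t 1) = 0 := by
      rw [Matrix.mulVec_single_one, col_transpose]; exact ht
    obtain ⟨h1, h2⟩ := quad _ hu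
    rw [Matrix.single_one_vecMul] at h1
    rw [Matrix.mulVec_single_one] at h2
    apply hBrow t
    funext x
    cases x with
    | inl l => simpa using congrFun h1 l
    | inr l => simpa using congrFun h2 l
  refine ⟨?_, ?_, ?_⟩
  · rw [hSkEq, hMV]
    simp only [transpose_mul, Matrix.mul_assoc]
  · intro i h
    rw [hZV i] at h
    exact hVrow i.1 h
  · intro i i'
    constructor
    · rintro ⟨c, hc, hrow⟩
      by_contra hne
      rw [hZV i, hZV i'] at hrow
      set u : Fin q → ℝ := c • (Pi.single i.1 1 : Fin q → ℝ) - (Pi.single i'.1 1 : Fin q → ℝ) with hu_def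
      have hu : Vᵀ *ᵥ u = 0 := by
        rw [hu_def, Matrix.mulVec_sub, Matrix.mulVec_smul, Matrix.mulVec_single_one,
          Matrix.mulVec_single_one]
        show c • V i.1 - V i'.1 = 0
        rw [← hrow, sub_self]
      obtain ⟨h1, h2⟩ := quad u hu
      rw [hu_def, Matrix.sub_vecMul, Matrix.smul_vecMul, Matrix.single_one_vecMul,
        Matrix.single_one_vecMul] at h1
      rw [hu_def, Matrix.mulVec_sub, Matrix.mulVec_smul, Matrix.mulVec_single_one,
        Matrix.mulVec_single_one] at h2
      have hrel : c • (Matrix.fromCols B Bᵀ) i.1 +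
          (-1 : ℝ) • (Matrix.fromCols B Bᵀ) i'.1 = 0 := by
        funext x
        cases x with
        | inl l =>
          have := congrFun h1 l
          simpa [sub_eq_add_neg] using this
        | inr l =>
          have := congrFun h2 l
          simpa [sub_eq_add_neg] using this
      have := hBmin i.1 i'.1 hne c (-1) hrel
      exact hc this.1
    · intro h
      refine ⟨1, one_ne_zero, ?_⟩
      rw [hZV i, hZV i', h, one_smul]
end

section
/- Let A be a symmetric n×n real matrix and β ∈ ℝ, and let S_k be the similarity iteration S_1 = A Aᵀ + Aᵀ A, S_{k+1} = A(I + β² S_k)Aᵀ + Aᵀ(I + β² S_k)A. Then S_1 = 2A², every S_k commutes with A, and for every k ≥ 1, S_k = 2A² · Σ_{ℓ=1}^{k} (2β²)^{ℓ−1} A^{2(ℓ−1)}. -/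
open Matrix

/-- For symmetric `A`, the similarity iteration satisfies `S₁ = 2A²`,
every `S_k` commutes with `A`, and
`S_k = 2A² · Σ_{ℓ=1}^{k} (2β²)^{ℓ−1} A^{2(ℓ−1)}` for every `k ≥ 1`. -/
theorem symmetric_Sk_closed_form (n : ℕ) (A : Matrix (Fin n) (Fin n) ℝ) (hA : Aᵀ = A)
    (β : ℝ)
    (S : ℕ → Matrix (Fin n) (Fin n) ℝ)
    (hS1 : S 1 = A * Aᵀ + Aᵀ * A)
    (hSk : ∀ k, 1 ≤ k →
      S (k + 1) = A * (1 + β ^ 2 • S k) * Aᵀ + Aᵀ * (1 + β ^ 2 • S k) * A) :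
    S 1 = (2 : ℝ) • A ^ 2 ∧
    (∀ k, 1 ≤ k → S k * A = A * S k) ∧
    ∀ k, 1 ≤ k →
      S k = (2 : ℝ) • (A ^ 2 * ∑ ℓ ∈ Finset.range k, ((2 * β ^ 2) ^ ℓ) • A ^ (2 * ℓ)) := by
  set T : ℕ → Matrix (Fin n) (Fin n) ℝ :=
    fun k => ∑ ℓ ∈ Finset.range k, ((2 * β ^ 2) ^ ℓ) • A ^ (2 * ℓ) with hT
  have commT : ∀ k, T k * A = A * T k := by
    intro k
    simp only [hT, Finset.sum_mul, Finset.mul_sum, smul_mul_assoc, mul_smul_comm,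
      pow_mul_comm']
  have Tsucc : ∀ k, T (k + 1) = 1 + (2 * β ^ 2) • (A ^ 2 * T k) := by
    intro k
    simp only [hT]
    rw [Finset.sum_range_succ']
    simp only [pow_zero, one_smul, mul_zero]
    rw [Finset.mul_sum, Finset.smul_sum, add_comm]
    congr 1
    refine Finset.sum_congr rfl fun i _ => ?_
    rw [mul_smul_comm, smul_smul, ← pow_succ', ← pow_add]
    have h2 : 2 + 2 * i = 2 * (i + 1) := by ring
    rw [h2]
  have key : ∀ k, 1 ≤ k → S k = (2 : ℝ) • (A ^ 2 * T k) := by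
    intro k hk
    induction k with
    | zero => omega
    | succ k ih =>
      rcases Nat.eq_zero_or_pos k with hk0 | hk1
      · subst hk0
        simp [hS1, hA, hT, pow_two, two_smul, mul_one]
      · rw [hSk k hk1, ih hk1, hA, Tsucc]
        set X := A ^ 2 * T k with hX
        have hXA : X * A = A * X := by
          rw [hX, mul_assoc, commT, ← mul_assoc, ← mul_assoc, pow_mul_comm']
        have h1 : A * (1 + β ^ 2 • ((2 : ℝ) • X)) * A
            = A ^ 2 + (β ^ 2 * 2) • (A ^ 2 * X) := by
          rw [mul_add, mul_one, add_mul, ← pow_two, smul_smul, mul_smul_comm,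
            smul_mul_assoc, mul_assoc, hXA, ← mul_assoc, ← pow_two]
        rw [h1, mul_add, mul_one, mul_smul_comm, smul_add, smul_smul]
        module
  refine ⟨?_, ?_, ?_⟩
  · rw [hS1, hA, pow_two, two_smul]
  · intro k hk
    rw [key k hk, smul_mul_assoc, mul_smul_comm, mul_assoc, commT, ← mul_assoc,
      ← mul_assoc, pow_mul_comm']
  · exact key
end

section
/- Let A be a symmetric n×n real matrix with eigenvalue α associated to eigenvector v, and let S_k be the similarity iteration for A with parameter β ∈ ℝ. Then v is an eigenvector of S_k with eigenvalue 2α² · Σ_{ℓ=1}^{k} (2β²α²)^{ℓ−1}; in particular, the eigenvalues [λ_i^{(k)}]² of S_k satisfy [λ_i^{(1)}]² = 2α_i² and [λ_i^{(k)}]² = [λ_i^{(1)}]² Σ_{ℓ=1}^{k} (β λ_i^{(1)})^{2(ℓ−1)}, where α_i are the eigenvalues of A. -/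
open Matrix

/-- If `A` is symmetric with eigenvector `v` for eigenvalue `α`, then `v`
is an eigenvector of every similarity iterate `S_k` with eigenvalue
`2α² Σ_{ℓ=1}^{k} (2β²α²)^{ℓ−1}`; i.e. the eigenvalues `[λ^{(k)}]²` of `S_k` satisfy
`[λ^{(1)}]² = 2α²` and `[λ^{(k)}]² = [λ^{(1)}]² Σ_{ℓ=1}^{k} (β λ^{(1)})^{2(ℓ−1)}`. -/
theorem symmetric_Sk_eigenvalue (n : ℕ) (A : Matrix (Fin n) (Fin n) ℝ) (hA : Aᵀ = A)
    (β α : ℝ) (v : Fin n → ℝ) (hv : v ≠ 0) (hAv : A.mulVec v = α • v)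
    (S : ℕ → Matrix (Fin n) (Fin n) ℝ)
    (hS1 : S 1 = A * Aᵀ + Aᵀ * A)
    (hSk : ∀ k, 1 ≤ k →
      S (k + 1) = A * (1 + β ^ 2 • S k) * Aᵀ + Aᵀ * (1 + β ^ 2 • S k) * A) :
    ∀ k, 1 ≤ k →
      (S k).mulVec v
        = (2 * α ^ 2 * ∑ ℓ ∈ Finset.range k, (2 * β ^ 2 * α ^ 2) ^ ℓ) • v ∧
      2 * α ^ 2 * ∑ ℓ ∈ Finset.range k, (2 * β ^ 2 * α ^ 2) ^ ℓ
        = (2 * α ^ 2) * ∑ ℓ ∈ Finset.range k, (β ^ 2 * (2 * α ^ 2)) ^ ℓ := by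
  have hmain : ∀ k, 1 ≤ k → (S k).mulVec v
      = (2 * α ^ 2 * ∑ ℓ ∈ Finset.range k, (2 * β ^ 2 * α ^ 2) ^ ℓ) • v := by
    intro k hk
    induction k, hk using Nat.le_induction with
    | base =>
      rw [hS1, hA]
      rw [Matrix.add_mulVec, ← Matrix.mulVec_mulVec, hAv, Matrix.mulVec_smul, hAv]
      simp only [Finset.range_one, Finset.sum_singleton, pow_zero, mul_one]
      module
    | succ k hk ih =>
      rw [hSk k hk, hA]
      rw [Matrix.add_mulVec, ← Matrix.mulVec_mulVec, ← Matrix.mulVec_mulVec, hAv,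
        Matrix.mulVec_smul, Matrix.add_mulVec, Matrix.smul_mulVec, ih,
        Matrix.one_mulVec]
      simp only [Matrix.mulVec_smul, Matrix.mulVec_add, hAv]
      rw [geom_sum_succ]
      set c := ∑ ℓ ∈ Finset.range k, (2 * β ^ 2 * α ^ 2) ^ ℓ
      rw [smul_add]
      match_scalars
      ring
  intro k hk
  refine ⟨hmain k hk, ?_⟩
  congr 1
  exact Finset.sum_congr rfl fun ℓ _ => by ring_nf
end

section
/- Let a, b, β be real numbers with a > b > 0 and β > 0, and for k ≥ 1 define f_k(x) := x² · Σ_{ℓ=1}^{k} (βx)^{2(ℓ−1)}. Then for every k ≥ 1, f_{k+1}(a)·f_k(b) > f_k(a)·f_{k+1}(b); equivalently, the ratio f_k(a)/f_k(b) is strictly increasing in k. -/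
/-- For `a > b > 0`, `β > 0`, and
`f_k(x) := x² Σ_{ℓ=1}^{k} (βx)^{2(ℓ−1)}`, one has
`f_{k+1}(a)·f_k(b) > f_k(a)·f_{k+1}(b)` for every `k ≥ 1`; i.e. the ratio
`f_k(a)/f_k(b)` is strictly increasing in `k`. -/
theorem fk_ratio_strictly_increasing (a b β : ℝ) (hab : a > b) (hb : b > 0) (hβ : β > 0)
    (f : ℕ → ℝ → ℝ)
    (hf : ∀ k x, f k x = x ^ 2 * ∑ ℓ ∈ Finset.range k, (β * x) ^ (2 * ℓ)) :
    ∀ k, 1 ≤ k → f (k + 1) a * f k b > f k a * f (k + 1) b := by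
  intro k hk
  have ha : (0:ℝ) < a := hb.trans hab
  have hc : (0:ℝ) < β * a := mul_pos hβ ha
  have hd : (0:ℝ) < β * b := mul_pos hβ hb
  have hdc : β * b < β * a := by nlinarith
  simp only [hf, Finset.sum_range_succ]
  have key : ∑ ℓ ∈ Finset.range k, (β*b)^(2*k) * (β*a)^(2*ℓ)
      < ∑ ℓ ∈ Finset.range k, (β*a)^(2*k) * (β*b)^(2*ℓ) := by
    apply Finset.sum_lt_sum_of_nonempty
    · exact Finset.nonempty_range_iff.mpr (by omega)
    · intro ℓ hℓ
      have hlk : ℓ < k := Finset.mem_range.mp hℓ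
      have h1 : (β*b)^(2*(k-ℓ)) < (β*a)^(2*(k-ℓ)) :=
        pow_lt_pow_left₀ hdc hd.le (by omega)
      have e1 : 2*k = 2*ℓ + 2*(k-ℓ) := by omega
      rw [e1, pow_add, pow_add]
      nlinarith [mul_pos (pow_pos hd (2*ℓ)) (pow_pos hc (2*ℓ)), h1,
        pow_pos hd (2*(k-ℓ)), pow_pos hc (2*(k-ℓ))]
  rw [← Finset.mul_sum, ← Finset.mul_sum] at key
  have hSb : (0:ℝ) ≤ ∑ ℓ ∈ Finset.range k, (β*b)^(2*ℓ) :=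
    Finset.sum_nonneg fun i _ => (pow_pos hd _).le
  have hSa : (0:ℝ) ≤ ∑ ℓ ∈ Finset.range k, (β*a)^(2*ℓ) :=
    Finset.sum_nonneg fun i _ => (pow_pos hc _).le
  nlinarith [mul_pos (pow_pos ha 2) (pow_pos hb 2), key, sq_nonneg a, sq_nonneg b]
end

section
/- Let A be an n×n real matrix that, in a 2×2 block partition with diagonal blocks of sizes n_1×n_1 and n_2×n_2 (n = n_1 + n_2), has both diagonal blocks zero: A = [[0, A_{12}], [A_{21}, 0]]. Then for every β ∈ ℝ and every k ≥ 1, the similarity matrix S_k is block diagonal with respect to the same partition: S_k = [[S_{11}^{(k)}, 0], [0, S_{22}^{(k)}]]. -/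
open Matrix

/-- If `A` has, in a 2×2 block partition, both diagonal blocks zero
(`A = [[0, A₁₂], [A₂₁, 0]]`, as for a bipartite graph), then every similarity iterate
`S_k` (`k ≥ 1`) is block diagonal with respect to the same partition. -/
theorem bipartite_Sk_blockDiagonal (n₁ n₂ : ℕ)
    (A : Matrix (Fin n₁ ⊕ Fin n₂) (Fin n₁ ⊕ Fin n₂) ℝ)
    (A₁₂ : Matrix (Fin n₁) (Fin n₂) ℝ) (A₂₁ : Matrix (Fin n₂) (Fin n₁) ℝ)
    (hA : A = Matrix.fromBlocks 0 A₁₂ A₂₁ 0)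
    (β : ℝ)
    (S : ℕ → Matrix (Fin n₁ ⊕ Fin n₂) (Fin n₁ ⊕ Fin n₂) ℝ)
    (hS1 : S 1 = A * Aᵀ + Aᵀ * A)
    (hSk : ∀ k, 1 ≤ k →
      S (k + 1) = A * (1 + β ^ 2 • S k) * Aᵀ + Aᵀ * (1 + β ^ 2 • S k) * A) :
    ∀ k, 1 ≤ k → ∃ (S₁₁ : Matrix (Fin n₁) (Fin n₁) ℝ) (S₂₂ : Matrix (Fin n₂) (Fin n₂) ℝ),
      S k = Matrix.fromBlocks S₁₁ 0 0 S₂₂ := by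
  intro k hk
  induction k with
  | zero => omega
  | succ k ih =>
    rcases Nat.eq_or_lt_of_le hk with h1 | h1
    · refine ⟨A₁₂ * A₁₂ᵀ + A₂₁ᵀ * A₂₁, A₂₁ * A₂₁ᵀ + A₁₂ᵀ * A₁₂, ?_⟩
      rw [← h1, hS1, hA]
      simp [Matrix.fromBlocks_transpose, Matrix.fromBlocks_multiply,
        Matrix.fromBlocks_add]
    · have hk1 : 1 ≤ k := by omega
      obtain ⟨P, Q, hPQ⟩ := ih hk1
      refine ⟨A₁₂ * (1 + β ^ 2 • Q) * A₁₂ᵀ + A₂₁ᵀ * (1 + β ^ 2 • Q) * A₂₁,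
        A₂₁ * (1 + β ^ 2 • P) * A₂₁ᵀ + A₁₂ᵀ * (1 + β ^ 2 • P) * A₁₂, ?_⟩
      rw [hSk k hk1, hPQ, hA]
      have h1 : (1 : Matrix (Fin n₁ ⊕ Fin n₂) (Fin n₁ ⊕ Fin n₂) ℝ) =
          Matrix.fromBlocks 1 0 0 1 := by simp
      rw [h1]
      simp only [Matrix.fromBlocks_transpose, Matrix.fromBlocks_multiply,
        Matrix.fromBlocks_add, Matrix.fromBlocks_smul, smul_zero, Matrix.transpose_zero,
        Matrix.mul_zero, Matrix.zero_mul, add_zero, zero_add]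
end

section
/- Let A be an n×n real matrix and Q an n×n diagonal matrix with Q² = I such that QAQ = |A|, where |A| denotes the entrywise absolute value of A. Let S_k be the similarity iteration for A and S̃_k the similarity iteration for Ã := |A|, both with the same parameter β ∈ ℝ. Then for every k ≥ 1, S̃_k = Q S_k Q and S̃_k = |S_k| (entrywise); consequently S_k and S̃_k have the same rank and the same singular values. -/
open Matrix Polynomial

section Aux

variable {n : ℕ}

lemma aux_map_mul (X Y : Matrix (Fin n) (Fin n) ℝ) :
    (X * Y).map (Polynomial.C : ℝ → ℝ[X]) =
      X.map Polynomial.C * Y.map Polynomial.C :=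
  Matrix.map_mul (f := (Polynomial.C : ℝ →+* ℝ[X]))

lemma aux_conj_mul (Q X Y : Matrix (Fin n) (Fin n) ℝ) (hQ2 : Q * Q = 1) :
    (Q * X * Q) * (Q * Y * Q) = Q * (X * Y) * Q := by
  rw [Matrix.mul_assoc (Q * X) Q (Q * Y * Q), ← Matrix.mul_assoc Q (Q * Y) Q,
    ← Matrix.mul_assoc Q Q Y, hQ2, Matrix.one_mul, ← Matrix.mul_assoc (Q * X) Y Q,
    Matrix.mul_assoc Q X Y]

lemma aux_conj_mul3 (Q X Y Z : Matrix (Fin n) (Fin n) ℝ) (hQ2 : Q * Q = 1) :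
    (Q * X * Q) * (Q * Y * Q) * (Q * Z * Q) = Q * (X * Y * Z) * Q := by
  rw [aux_conj_mul Q X Y hQ2, aux_conj_mul Q (X * Y) Z hQ2]

lemma aux_charpoly_conj (Q M : Matrix (Fin n) (Fin n) ℝ) (hQ2 : Q * Q = 1) :
    (Q * M * Q).charpoly = M.charpoly := by
  classical
  set Qc : Matrix (Fin n) (Fin n) ℝ[X] := Q.map Polynomial.C with hQc
  have h1 : Qc * Qc = 1 := by
    rw [hQc, ← aux_map_mul, hQ2]
    exact Matrix.map_one _ (map_zero _) (map_one _)
  have key : charmatrix (Q * M * Q) = Qc * charmatrix M * Qc := by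
    unfold charmatrix
    rw [Matrix.mul_sub, Matrix.sub_mul]
    congr 1
    · have hs : (Matrix.scalar (Fin n)) (X : ℝ[X])
          = (X : ℝ[X]) • (1 : Matrix (Fin n) (Fin n) ℝ[X]) := by
        ext i j
        by_cases h : i = j <;>
          simp [Matrix.scalar_apply, Matrix.smul_apply, Matrix.one_apply,
            Matrix.diagonal_apply, h]
      rw [hs, Matrix.mul_smul, Matrix.smul_mul, Matrix.mul_one, h1]
    · show ((Q * M * Q).map Polynomial.C : Matrix (Fin n) (Fin n) ℝ[X]) = _
      rw [aux_map_mul, aux_map_mul]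
      rfl
  have hdet : Qc.det * Qc.det = 1 := by
    rw [← Matrix.det_mul, h1, Matrix.det_one]
  rw [Matrix.charpoly, Matrix.charpoly, key, Matrix.det_mul, Matrix.det_mul,
    mul_comm Qc.det (charmatrix M).det, mul_assoc, hdet, mul_one]

lemma aux_conj_apply (Q M : Matrix (Fin n) (Fin n) ℝ) (hQ : Q.IsDiag) (i j : Fin n) :
    (Q * M * Q) i j = Q i i * M i j * Q j j := by
  rw [Matrix.mul_apply,
    Finset.sum_eq_single j (fun b _ hb => by rw [hQ hb, mul_zero]) (by simp),
    Matrix.mul_apply,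
    Finset.sum_eq_single i (fun b _ hb => by rw [hQ (Ne.symm hb), zero_mul]) (by simp)]

lemma aux_mul_nonneg {X Y : Matrix (Fin n) (Fin n) ℝ}
    (hX : ∀ i j, 0 ≤ X i j) (hY : ∀ i j, 0 ≤ Y i j) :
    ∀ i j, 0 ≤ (X * Y) i j := by
  intro i j
  rw [Matrix.mul_apply]
  exact Finset.sum_nonneg fun k _ => mul_nonneg (hX i k) (hY k j)

end Aux

/-- If `Q` is a diagonal sign matrix (`Q² = I`) with `QAQ = |A|`
(checkerboard pattern), and `S_k`, `S̃_k` are the similarity iterations of `A` and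
`|A|` respectively (same `β`), then for every `k ≥ 1`, `S̃_k = Q S_k Q` and
`S̃_k = |S_k|` entrywise; consequently `S_k` and `S̃_k` have the same rank and the same
singular values (equal characteristic polynomials of `M Mᵀ`). -/
theorem checkerboard_similarity_conjugation (n : ℕ)
    (A Q : Matrix (Fin n) (Fin n) ℝ)
    (hQdiag : Q.IsDiag) (hQ2 : Q * Q = 1)
    (hQAQ : Q * A * Q = A.map (fun x => |x|))
    (β : ℝ)
    (S St : ℕ → Matrix (Fin n) (Fin n) ℝ)
    (hS1 : S 1 = A * Aᵀ + Aᵀ * A)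
    (hSk : ∀ k, 1 ≤ k →
      S (k + 1) = A * (1 + β ^ 2 • S k) * Aᵀ + Aᵀ * (1 + β ^ 2 • S k) * A)
    (hSt1 : St 1 = (A.map fun x => |x|) * (A.map fun x => |x|)ᵀ
      + (A.map fun x => |x|)ᵀ * (A.map fun x => |x|))
    (hStk : ∀ k, 1 ≤ k →
      St (k + 1) = (A.map fun x => |x|) * (1 + β ^ 2 • St k) * (A.map fun x => |x|)ᵀ
        + (A.map fun x => |x|)ᵀ * (1 + β ^ 2 • St k) * (A.map fun x => |x|)) :
    ∀ k, 1 ≤ k →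
      St k = Q * S k * Q ∧
      St k = (S k).map (fun x => |x|) ∧
      (St k).rank = (S k).rank ∧
      (St k * (St k)ᵀ).charpoly = (S k * (S k)ᵀ).charpoly := by
  have hQT : Qᵀ = Q := hQdiag.isSymm
  have hAT : Q * Aᵀ * Q = (A.map fun x => |x|)ᵀ := by
    rw [← hQAQ, Matrix.transpose_mul, Matrix.transpose_mul, hQT, ← Matrix.mul_assoc]
  have hAabs : ∀ i j, 0 ≤ (A.map fun x => |x|) i j := fun i j => abs_nonneg _
  have hAabsT : ∀ i j, 0 ≤ (A.map fun x => |x|)ᵀ i j := fun i j => abs_nonneg _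
  have hQsq : ∀ i : Fin n, Q i i * Q i i = 1 := by
    intro i
    have h := congrArg (fun M => M i i) hQ2
    simp only [Matrix.mul_apply, Matrix.one_apply_eq] at h
    rw [← h, Finset.sum_eq_single i (fun b _ hb => by rw [hQdiag (Ne.symm hb), zero_mul])
      (by simp)]
  have main : ∀ k, 1 ≤ k → St k = Q * S k * Q ∧ ∀ i j, 0 ≤ St k i j := by
    intro k hk
    induction k, hk using Nat.le_induction with
    | base =>
      constructor
      · rw [hSt1, hS1, ← hAT, ← hQAQ, aux_conj_mul Q A Aᵀ hQ2, aux_conj_mul Q Aᵀ A hQ2,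
          ← Matrix.add_mul, ← Matrix.mul_add]
      · rw [hSt1]
        intro i j
        exact add_nonneg (aux_mul_nonneg hAabs hAabsT i j) (aux_mul_nonneg hAabsT hAabs i j)
    | succ m hm ih =>
      obtain ⟨ihc, ihn⟩ := ih
      have hB : (1 : Matrix (Fin n) (Fin n) ℝ) + β ^ 2 • St m
          = Q * (1 + β ^ 2 • S m) * Q := by
        rw [Matrix.mul_add, Matrix.add_mul, Matrix.mul_one, hQ2, ihc]
        congr 1
        rw [Matrix.mul_smul, Matrix.smul_mul]
      have hBnn : ∀ i j, 0 ≤ ((1 : Matrix (Fin n) (Fin n) ℝ) + β ^ 2 • St m) i j := by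
        intro i j
        have h1 : (0:ℝ) ≤ (1 : Matrix (Fin n) (Fin n) ℝ) i j := by
          rw [Matrix.one_apply]; split <;> norm_num
        have h2 : (0:ℝ) ≤ (β ^ 2 • St m) i j := by
          rw [Matrix.smul_apply]
          exact smul_nonneg (sq_nonneg β) (ihn i j)
        exact add_nonneg h1 h2
      constructor
      · rw [hStk m hm, hSk m hm, ← hAT, ← hQAQ, hB,
          aux_conj_mul3 Q A (1 + β ^ 2 • S m) Aᵀ hQ2,
          aux_conj_mul3 Q Aᵀ (1 + β ^ 2 • S m) A hQ2,
          ← Matrix.add_mul, ← Matrix.mul_add]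
      · rw [hStk m hm]
        intro i j
        exact add_nonneg
          (aux_mul_nonneg (aux_mul_nonneg hAabs hBnn) hAabsT i j)
          (aux_mul_nonneg (aux_mul_nonneg hAabsT hBnn) hAabs i j)
  intro k hk
  obtain ⟨hc, hnn⟩ := main k hk
  have hQdet : IsUnit Q.det := by
    apply IsUnit.of_mul_eq_one Q.det
    rw [← Matrix.det_mul, hQ2, Matrix.det_one]
  refine ⟨hc, ?_, ?_, ?_⟩
  · ext i j
    rw [Matrix.map_apply]
    have h1 : St k i j = Q i i * S k i j * Q j j := by
      rw [hc]; exact aux_conj_apply Q (S k) hQdiag i j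
    have habsi : |Q i i| = 1 := by
      have := hQsq i
      nlinarith [abs_nonneg (Q i i), abs_mul_abs_self (Q i i)]
    have habsj : |Q j j| = 1 := by
      have := hQsq j
      nlinarith [abs_nonneg (Q j j), abs_mul_abs_self (Q j j)]
    have h2 : |St k i j| = |S k i j| := by
      rw [h1, abs_mul, abs_mul, habsi, habsj, one_mul, mul_one]
    rw [← h2, abs_of_nonneg (hnn i j)]
  · rw [hc, Matrix.rank_mul_eq_left_of_isUnit_det Q (Q * S k) hQdet,
      Matrix.rank_mul_eq_right_of_isUnit_det Q (S k) hQdet]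
  · have hT : (St k)ᵀ = Q * (S k)ᵀ * Q := by
      rw [hc, Matrix.transpose_mul, Matrix.transpose_mul, hQT, ← Matrix.mul_assoc]
    have hP : St k * (St k)ᵀ = Q * (S k * (S k)ᵀ) * Q := by
      rw [hT, hc, aux_conj_mul Q (S k) (S k)ᵀ hQ2]
    rw [hP]
    exact aux_charpoly_conj Q (S k * (S k)ᵀ) hQ2
end

section
/- Let A = Z B Zᵀ where B is a q×q matrix with entries in {0, 1} and Z is an n×q matrix with entries in {0, 1, −1} such that each row of Z has exactly one nonzero entry. Then there exists an n×n diagonal matrix Q with diagonal entries ±1 (so Q² = I) such that QAQ = |A| (entrywise absolute value) and |A| = Z̃ B Z̃ᵀ where Z̃ := QZ has entries in {0, 1} with exactly one entry equal to 1 in each row. -/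
open Matrix

/-- If `A = Z B Zᵀ` with `B ∈ {0,1}^{q×q}` and `Z ∈ {0,1,−1}^{n×q}`
having exactly one nonzero entry per row, then there is a diagonal sign matrix `Q`
(diagonal entries `±1`, so `Q² = I`) with `QAQ = |A|` and `|A| = (QZ) B (QZ)ᵀ`, where
`Z̃ := QZ` has entries in `{0,1}` with exactly one `1` in each row. -/
theorem signed_ideal_to_unsigned_ideal (n q : ℕ)
    (B : Matrix (Fin q) (Fin q) ℝ) (hB : ∀ i j, B i j = 0 ∨ B i j = 1)
    (Z : Matrix (Fin n) (Fin q) ℝ)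
    (hZ : ∀ i j, Z i j = 0 ∨ Z i j = 1 ∨ Z i j = -1)
    (hZrow : ∀ i, ∃! j, Z i j ≠ 0)
    (A : Matrix (Fin n) (Fin n) ℝ) (hA : A = Z * B * Zᵀ) :
    ∃ Q : Matrix (Fin n) (Fin n) ℝ,
      Q.IsDiag ∧ (∀ i, Q i i = 1 ∨ Q i i = -1) ∧ Q * Q = 1 ∧
      Q * A * Q = A.map (fun x => |x|) ∧
      A.map (fun x => |x|) = (Q * Z) * B * (Q * Z)ᵀ ∧
      (∀ i j, (Q * Z) i j = 0 ∨ (Q * Z) i j = 1) ∧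
      (∀ i, ∃! j, (Q * Z) i j = 1) := by
  choose f hf hfu using hZrow
  set ε : Fin n → ℝ := fun i => Z i (f i) with hε
  have hzero : ∀ i j, j ≠ f i → Z i j = 0 := by
    intro i j hj
    by_contra h
    exact hj (hfu i j h)
  have hεsq : ∀ i, ε i * ε i = 1 := by
    intro i
    rcases hZ i (f i) with h | h | h
    · exact absurd h (hf i)
    · simp [hε, h]
    · simp [hε, h]
  have hεpm : ∀ i, ε i = 1 ∨ ε i = -1 := by
    intro i
    rcases hZ i (f i) with h | h | h
    · exact absurd h (hf i)
    · exact Or.inl h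
    · exact Or.inr h
  have hBnn : ∀ j l, 0 ≤ B j l := by
    intro j l; rcases hB j l with h | h <;> simp [h]
  have hQZe : ∀ i j, (Matrix.diagonal ε * Z) i j = ε i * Z i j := by
    intro i j; rw [Matrix.diagonal_mul]
  -- entry formula for products of the shape `W B Wᵀ` where rows of W vanish off f
  have key : ∀ (W : Matrix (Fin n) (Fin q) ℝ), (∀ i j, j ≠ f i → W i j = 0) →
      ∀ i k, (W * B * Wᵀ) i k = W i (f i) * B (f i) (f k) * W k (f k) := by
    intro W hW i k
    simp only [Matrix.mul_apply, Matrix.transpose_apply]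
    rw [Finset.sum_eq_single_of_mem (f k) (Finset.mem_univ _)
      (fun l _ hl => by rw [hW k l hl]; ring)]
    rw [Finset.sum_eq_single_of_mem (f i) (Finset.mem_univ _)
      (fun j _ hj => by rw [hW i j hj]; ring)]
  have hAe : ∀ i k, A i k = ε i * B (f i) (f k) * ε k := by
    intro i k; rw [hA]; exact key Z hzero i k
  have habs : ∀ i k, |A i k| = B (f i) (f k) := by
    intro i k
    rw [hAe, abs_mul, abs_mul]
    have h1 : |ε i| = 1 := by rcases hεpm i with h | h <;> simp [h]
    have h2 : |ε k| = 1 := by rcases hεpm k with h | h <;> simp [h]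
    rw [h1, h2, abs_of_nonneg (hBnn _ _)]; ring
  refine ⟨Matrix.diagonal ε, Matrix.isDiag_diagonal ε, by simp [hεpm], ?_, ?_, ?_, ?_, ?_⟩
  · rw [Matrix.diagonal_mul_diagonal]
    ext i k
    by_cases h : i = k
    · subst h; simp [hεsq i]
    · simp [Matrix.diagonal_apply, Matrix.one_apply, h]
  · ext i k
    rw [Matrix.map_apply, Matrix.mul_diagonal, Matrix.diagonal_mul, habs, hAe]
    linear_combination (B (f i) (f k) * (ε k * ε k)) * hεsq i + B (f i) (f k) * hεsq k
  · ext i k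
    rw [Matrix.map_apply, habs,
      key (Matrix.diagonal ε * Z) (fun i j hj => by rw [hQZe, hzero i j hj]; ring) i k,
      hQZe, hQZe]
    have hz : ∀ m, Z m (f m) = ε m := fun m => rfl
    rw [hz, hz]
    linear_combination (-(B (f i) (f k) * (ε k * ε k))) * hεsq i - B (f i) (f k) * hεsq k
  · intro i j
    rw [hQZe]
    by_cases hj : j = f i
    · subst hj; right; exact hεsq i
    · left; rw [hzero i j hj]; ring
  · intro i
    refine ⟨f i, ?_, ?_⟩
    · show (Matrix.diagonal ε * Z) i (f i) = 1
      rw [hQZe]; exact hεsq i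
    · intro j hj
      by_contra h
      rw [hQZe, hzero i j h] at hj
      simp at hj
end

section
/- Let A be an n×n real matrix, D an invertible n×n diagonal matrix, A_W := D A D, and β ∈ ℝ. Let S_k be the similarity iteration for A, and define S_k^D := D S_k D. Then the matrices S_k^D satisfy the weighted recurrences S_1^D = A_W D^{−2} A_Wᵀ + A_Wᵀ D^{−2} A_W and S_{k+1}^D = A_W (D^{−2} + β² D^{−2} S_k^D D^{−2}) A_Wᵀ + A_Wᵀ (D^{−2} + β² D^{−2} S_k^D D^{−2}) A_W, and rank(S_k^D) = rank(S_k) for every k ≥ 1. -/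
open Matrix

/-- For an invertible diagonal `D`, weighted adjacency `A_W := D A D`,
and `S_k` the similarity iteration for `A`, the scaled matrices `S_k^D := D S_k D`
satisfy the weighted recurrences
`S₁^D = A_W D⁻² A_Wᵀ + A_Wᵀ D⁻² A_W`,
`S_{k+1}^D = A_W (D⁻² + β² D⁻² S_k^D D⁻²) A_Wᵀ + A_Wᵀ (D⁻² + β² D⁻² S_k^D D⁻²) A_W`,
and `rank S_k^D = rank S_k` for every `k ≥ 1`. -/
theorem weighted_similarity_recurrence (n : ℕ)
    (A D : Matrix (Fin n) (Fin n) ℝ)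
    (hDdiag : D.IsDiag) (hDinv : IsUnit D.det)
    (AW : Matrix (Fin n) (Fin n) ℝ) (hAW : AW = D * A * D)
    (β : ℝ)
    (S : ℕ → Matrix (Fin n) (Fin n) ℝ)
    (hS1 : S 1 = A * Aᵀ + Aᵀ * A)
    (hSk : ∀ k, 1 ≤ k →
      S (k + 1) = A * (1 + β ^ 2 • S k) * Aᵀ + Aᵀ * (1 + β ^ 2 • S k) * A)
    (SD : ℕ → Matrix (Fin n) (Fin n) ℝ)
    (hSD : ∀ k, SD k = D * S k * D) :
    SD 1 = AW * (D⁻¹ * D⁻¹) * AWᵀ + AWᵀ * (D⁻¹ * D⁻¹) * AW ∧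
    (∀ k, 1 ≤ k →
      SD (k + 1)
        = AW * (D⁻¹ * D⁻¹ + β ^ 2 • (D⁻¹ * D⁻¹ * SD k * (D⁻¹ * D⁻¹))) * AWᵀ
          + AWᵀ * (D⁻¹ * D⁻¹ + β ^ 2 • (D⁻¹ * D⁻¹ * SD k * (D⁻¹ * D⁻¹))) * AW) ∧
    ∀ k, 1 ≤ k → (SD k).rank = (S k).rank := by
  have hDT : Dᵀ = D := hDdiag.isSymm
  have h1 : D * D⁻¹ = 1 := Matrix.mul_nonsing_inv D hDinv
  have h2 : D⁻¹ * D = 1 := Matrix.nonsing_inv_mul D hDinv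
  have hAWT : AWᵀ = D * Aᵀ * D := by
    rw [hAW]; simp [transpose_mul, hDT, mul_assoc]
  have key : ∀ X Y : Matrix (Fin n) (Fin n) ℝ,
      D * X * D * (D⁻¹ * D⁻¹) * (D * Y * D) = D * (X * Y) * D := by
    intro X Y
    have h : D * X * D * (D⁻¹ * D⁻¹) * (D * Y * D)
        = D * X * ((D * D⁻¹) * (D⁻¹ * D)) * (Y * D) := by noncomm_ring
    rw [h, h1, h2]; simp [mul_assoc]
  have key2 : ∀ X M Y : Matrix (Fin n) (Fin n) ℝ,
      D * X * D * (D⁻¹ * M * D⁻¹) * (D * Y * D) = D * (X * M * Y) * D := by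
    intro X M Y
    have h : D * X * D * (D⁻¹ * M * D⁻¹) * (D * Y * D)
        = D * X * ((D * D⁻¹) * M * (D⁻¹ * D)) * (Y * D) := by noncomm_ring
    rw [h, h1, h2]; simp [mul_assoc]
  refine ⟨?_, ?_, ?_⟩
  · rw [hSD, hS1, hAWT, hAW, key A Aᵀ, key Aᵀ A]
    noncomm_ring
  · intro k hk
    have hmid : D⁻¹ * D⁻¹ + β ^ 2 • (D⁻¹ * D⁻¹ * SD k * (D⁻¹ * D⁻¹))
        = D⁻¹ * (1 + β ^ 2 • S k) * D⁻¹ := by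
      rw [hSD]
      have e : D⁻¹ * D⁻¹ * (D * S k * D) * (D⁻¹ * D⁻¹) = D⁻¹ * S k * D⁻¹ := by
        have h : D⁻¹ * D⁻¹ * (D * S k * D) * (D⁻¹ * D⁻¹)
            = D⁻¹ * ((D⁻¹ * D) * S k * (D * D⁻¹)) * D⁻¹ := by noncomm_ring
        rw [h, h1, h2]; simp [mul_assoc]
      rw [e]
      simp [mul_add, add_mul, Matrix.mul_smul, Matrix.smul_mul, mul_assoc]
    rw [hSD (k+1), hSk k hk, hAWT, hAW, hmid, key2 A _ Aᵀ, key2 Aᵀ _ A]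
    noncomm_ring
  · intro k _
    rw [hSD k, Matrix.rank_mul_eq_left_of_isUnit_det D _ hDinv,
      Matrix.rank_mul_eq_right_of_isUnit_det D _ hDinv]
end
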